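/- arXiv:1308.0451 — 5 statements merged into one kernel-verified Lean document; each statement's English description precedes it below -/
import Mathlib

section
/- Let f be bounded on [0,1] and let x \in [0,1] be a point at which f''(x) exists. Then \lim_{n\to\infty} 2n (B_n(f;x) - f(x)) = x(1-x) f''(x). -/
open Finset

noncomputable def wt (n i : ℕ) (x : ℝ) : ℝ :=
  (n.choose i : ℝ) * x ^ i * (1 - x) ^ (n - i)

lemma d1 (i : ℕ) : ((i.descFactorial 1 : ℕ) : ℝ) = i := by
  rw [Nat.descFactorial_one]

lemma d2 (i : ℕ) : ((i.descFactorial 2 : ℕ) : ℝ) = (i:ℝ)^2 - i := by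
  rcases i with _ | j
  · simp
  · rw [Nat.succ_descFactorial_succ, Nat.descFactorial_one]
    push_cast; ring

lemma d3 (i : ℕ) : ((i.descFactorial 3 : ℕ) : ℝ) = (i:ℝ)^3 - 3*(i:ℝ)^2 + 2*i := by
  rcases i with _ | j
  · simp
  · rw [Nat.succ_descFactorial_succ]
    push_cast [d2]; ring

lemma d4 (i : ℕ) : ((i.descFactorial 4 : ℕ) : ℝ) = (i:ℝ)^4 - 6*(i:ℝ)^3 + 11*(i:ℝ)^2 - 6*i := by
  rcases i with _ | j
  · simp
  · rw [Nat.succ_descFactorial_succ]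
    push_cast [d3]; ring

lemma fall (x : ℝ) : ∀ (k n : ℕ),
    ∑ i ∈ range (n+1), (i.descFactorial k : ℝ) * wt n i x
      = (n.descFactorial k : ℝ) * x ^ k := by
  intro k
  induction k with
  | zero =>
    intro n
    simp only [Nat.descFactorial_zero, Nat.cast_one, one_mul, pow_zero, mul_one]
    have := add_pow x (1-x) n
    simp only [add_sub_cancel, one_pow] at this
    rw [this]
    unfold wt
    apply Finset.sum_congr rfl
    intro i _
    ring
  | succ k ih =>
    intro n
    rcases n with _ | m
    · simp [wt]
    · rw [Finset.sum_range_succ']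
      have step : ∀ j ∈ range (m+1),
          ((j+1).descFactorial (k+1) : ℝ) * wt (m+1) (j+1) x
            = ((m:ℝ)+1) * x * ((j.descFactorial k : ℝ) * wt m j x) := by
        intro j hj
        rw [Finset.mem_range] at hj
        have h1 : ((j+1).descFactorial (k+1) : ℝ) = ((j:ℝ)+1) * (j.descFactorial k : ℝ) := by
          rw [Nat.succ_descFactorial_succ]; push_cast; ring
        have h2 : ((m+1).choose (j+1) : ℝ) * ((j:ℝ)+1) = ((m:ℝ)+1) * (m.choose j : ℝ) := by
          have h := Nat.add_one_mul_choose_eq m j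
          have h' : ((m.succ * m.choose j : ℕ) : ℝ) = (((m+1).choose (j+1) * (j+1) : ℕ) : ℝ) := by
            rw [h]
          push_cast at h'
          linarith
        have h3 : m + 1 - (j+1) = m - j := by omega
        have h5 : ((j+1).descFactorial (k+1) : ℝ) * wt (m+1) (j+1) x
            = (j.descFactorial k : ℝ) * x^j * (1-x)^(m-j) * x
              * (((m+1).choose (j+1) : ℝ) * ((j:ℝ)+1)) := by
          unfold wt; rw [h1, h3]; ring
        rw [h5, h2]
        unfold wt; ring
      rw [Finset.sum_congr rfl step, ← Finset.mul_sum, ih m]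
      have z : ((Nat.descFactorial 0 (k+1) : ℕ) : ℝ) * wt (m+1) 0 x = 0 := by
        simp
      rw [z, add_zero, Nat.succ_descFactorial_succ]
      push_cast; ring

lemma sum_wt (n : ℕ) (x : ℝ) : ∑ i ∈ range (n+1), wt n i x = 1 := by
  have h := fall x 0 n
  simp only [Nat.descFactorial_zero, Nat.cast_one, one_mul, pow_zero, mul_one] at h
  exact h

lemma central1 (n : ℕ) (x : ℝ) :
    ∑ i ∈ range (n+1), ((i:ℝ) - n*x) * wt n i x = 0 := by
  have e : ∀ i ∈ range (n+1), ((i:ℝ) - n*x) * wt n i x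
      = (i.descFactorial 1 : ℝ) * wt n i x + (-(n*x)) * ((i.descFactorial 0 : ℝ) * wt n i x) := by
    intro i _
    rw [d1]; simp only [Nat.descFactorial_zero, Nat.cast_one]; ring
  rw [Finset.sum_congr rfl e, Finset.sum_add_distrib, ← Finset.mul_sum, fall, fall]
  simp only [Nat.descFactorial_zero, Nat.descFactorial_one, Nat.cast_one]
  ring

lemma central2 (n : ℕ) (x : ℝ) :
    ∑ i ∈ range (n+1), ((i:ℝ) - n*x)^2 * wt n i x = n*x*(1-x) := by
  have e : ∀ i ∈ range (n+1), ((i:ℝ) - n*x)^2 * wt n i x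
      = (i.descFactorial 2 : ℝ) * wt n i x
        + (1 - 2*(n*x)) * ((i.descFactorial 1 : ℝ) * wt n i x)
        + (n*x)^2 * ((i.descFactorial 0 : ℝ) * wt n i x) := by
    intro i _
    rw [d2, d1]; simp only [Nat.descFactorial_zero, Nat.cast_one]; ring
  rw [Finset.sum_congr rfl e]
  simp only [Finset.sum_add_distrib, ← Finset.mul_sum]
  rw [fall, fall, fall, d2]
  simp only [Nat.descFactorial_zero, Nat.descFactorial_one, Nat.cast_one]
  ring

lemma central4 (n : ℕ) (x : ℝ) :
    ∑ i ∈ range (n+1), ((i:ℝ) - n*x)^4 * wt n i x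
      = n*x*(1-x) + 3*n*((n:ℝ)-2)*x^2*(1-x)^2 := by
  have e : ∀ i ∈ range (n+1), ((i:ℝ) - n*x)^4 * wt n i x
      = (i.descFactorial 4 : ℝ) * wt n i x
        + (6 - 4*(n*x)) * ((i.descFactorial 3 : ℝ) * wt n i x)
        + (7 - 12*(n*x) + 6*(n*x)^2) * ((i.descFactorial 2 : ℝ) * wt n i x)
        + (1 - 4*(n*x) + 6*(n*x)^2 - 4*(n*x)^3) * ((i.descFactorial 1 : ℝ) * wt n i x)
        + (n*x)^4 * ((i.descFactorial 0 : ℝ) * wt n i x) := by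
    intro i _
    rw [d4, d3, d2, d1]; simp only [Nat.descFactorial_zero, Nat.cast_one]; ring
  rw [Finset.sum_congr rfl e]
  simp only [Finset.sum_add_distrib, ← Finset.mul_sum]
  rw [fall, fall, fall, fall, fall, d4, d3, d2]
  simp only [Nat.descFactorial_zero, Nat.descFactorial_one, Nat.cast_one]
  ring

open Filter Topology in
lemma taylor2 (f : ℝ → ℝ) (x d : ℝ)
    (hf' : ∀ᶠ y in nhds x, DifferentiableAt ℝ f y)
    (hf'' : HasDerivAt (deriv f) d x) :
    Tendsto (fun t => (f t - f x - deriv f x * (t - x)) / (t - x)^2)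
      (𝓝[≠] x) (𝓝 (d/2)) := by
  have hcont : ContinuousAt f x := (hf'.self_of_nhds).continuousAt
  apply HasDerivAt.lhopital_zero_nhdsNE (f' := fun t => deriv f t - deriv f x)
    (g' := fun t => 2*(t - x))
  · filter_upwards [nhdsWithin_le_nhds hf'] with t ht
    have h1 : HasDerivAt f (deriv f t) t := ht.hasDerivAt
    have h2 : HasDerivAt (fun t => f x + deriv f x * (t - x)) (deriv f x) t := by
      simpa using (((hasDerivAt_id t).sub_const x).const_mul (deriv f x)).const_add (f x)
    have h3 : HasDerivAt (fun s => f s - (f x + deriv f x * (s - x))) (deriv f t - deriv f x) t :=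
      h1.sub h2
    simpa [sub_sub] using h3
  · filter_upwards with t
    have : HasDerivAt (fun t => (t - x)^2) (2 * (t - x)^1 * 1) t :=
      ((hasDerivAt_id t).sub_const x).pow 2
    simpa using this
  · filter_upwards [self_mem_nhdsWithin] with t ht
    simp only [Set.mem_compl_iff, Set.mem_singleton_iff] at ht
    intro h
    apply ht
    have : t - x = 0 := by linarith
    linarith
  · have : Tendsto (fun t => f t - f x - deriv f x * (t - x)) (nhds x) (𝓝 0) := by
      have hc : ContinuousAt (fun t => f t - f x - deriv f x * (t - x)) x := by
        exact (hcont.sub continuousAt_const).sub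
          (continuousAt_const.mul ((continuousAt_id).sub continuousAt_const))
      have := hc.tendsto
      simpa using this
    exact this.mono_left nhdsWithin_le_nhds
  · have : Tendsto (fun t : ℝ => (t - x)^2) (nhds x) (𝓝 0) := by
      have hc : ContinuousAt (fun t : ℝ => (t - x)^2) x :=
        (continuousAt_id.sub continuousAt_const).pow 2
      have := hc.tendsto
      simpa using this
    exact this.mono_left nhdsWithin_le_nhds
  · have hs : Tendsto (slope (deriv f) x) (𝓝[≠] x) (𝓝 d) :=
      hasDerivAt_iff_tendsto_slope.mp hf''
    have := hs.div_const 2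
    apply this.congr
    intro t
    rw [slope_def_field]
    rw [div_div]
    ring_nf

/-- The `n`-th Bernstein polynomial of `f`. -/
noncomputable def bern (n : ℕ) (f : ℝ → ℝ) (x : ℝ) : ℝ :=
  ∑ i ∈ Finset.range (n + 1),
    (n.choose i : ℝ) * f ((i : ℝ) / n) * x ^ i * (1 - x) ^ (n - i)

set_option maxHeartbeats 1000000 in
open Filter Topology in
/-- Voronovskaya's theorem: if `f` is bounded on `[0,1]` and the second derivative
of `f` exists at `x ∈ [0,1]`, then `2n (Bₙ(f;x) - f(x)) → x(1-x) f''(x)`. -/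
theorem voronovskaya (f : ℝ → ℝ) (M : ℝ)
    (hbdd : ∀ t ∈ Set.Icc (0 : ℝ) 1, |f t| ≤ M)
    (x : ℝ) (hx : x ∈ Set.Icc (0 : ℝ) 1) (d : ℝ)
    (hf' : ∀ᶠ y in nhds x, DifferentiableAt ℝ f y)
    (hf'' : HasDerivAt (deriv f) d x) :
    Filter.Tendsto (fun n : ℕ => 2 * (n : ℝ) * (bern n f x - f x))
      Filter.atTop (nhds (x * (1 - x) * d)) := by
  obtain ⟨hx0, hx1⟩ := hx
  obtain ⟨c, hcdef⟩ : ∃ c : ℝ, c = deriv f x := ⟨_, rfl⟩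
  obtain ⟨h, hdef⟩ : ∃ h : ℝ → ℝ,
      h = fun t => if t = x then 0 else (f t - f x - c*(t-x))/(t-x)^2 - d/2 := ⟨_, rfl⟩
  have hM : 0 ≤ M := le_trans (abs_nonneg _) (hbdd 0 ⟨le_refl _, zero_le_one⟩)
  have hrep : ∀ t, f t = f x + c*(t-x) + d/2*(t-x)^2 + h t * (t-x)^2 := by
    intro t
    by_cases ht : t = x
    · subst ht; simp [hdef]
    · have hs : (t-x)^2 ≠ 0 := by
        have : t - x ≠ 0 := sub_ne_zero.mpr ht
        positivity
      rw [hdef]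
      simp only [if_neg ht]
      field_simp
      ring
  have hlim : Tendsto h (𝓝[≠] x) (𝓝 0) := by
    have h1 := taylor2 f x d hf' hf''
    have h2 := h1.sub_const (d/2)
    rw [sub_self] at h2
    apply h2.congr'
    filter_upwards [self_mem_nhdsWithin] with t ht
    simp only [Set.mem_compl_iff, Set.mem_singleton_iff] at ht
    rw [hdef]; simp [if_neg ht, hcdef]
  obtain ⟨C, hCdef⟩ : ∃ C : ℝ, C = 2*M + |c| + |d|/2 := ⟨_, rfl⟩
  have hC : 0 ≤ C := by
    rw [hCdef]
    have := abs_nonneg c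
    have := abs_nonneg d
    linarith
  have hCb : ∀ t ∈ Set.Icc (0:ℝ) 1, |h t| * (t-x)^2 ≤ C := by
    intro t ⟨ht0, ht1⟩
    by_cases ht : t = x
    · subst ht; simp [hdef, hC]
    · have htx : t - x ≠ 0 := sub_ne_zero.mpr ht
      have hs : (0:ℝ) < (t-x)^2 := by positivity
      have habs1 : |t - x| ≤ 1 := by rw [abs_le]; constructor <;> linarith
      have hsle : (t-x)^2 ≤ 1 := by
        calc (t-x)^2 = |t-x|^2 := (sq_abs _).symm
        _ ≤ 1 := by nlinarith [abs_nonneg (t-x)]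
      have hnum : |f t - f x - c*(t-x)| ≤ 2*M + |c| := by
        have hft := hbdd t ⟨ht0, ht1⟩
        have hfx := hbdd x ⟨hx0, hx1⟩
        have h1 := abs_sub (f t - f x) (c*(t-x))
        have h2 := abs_sub (f t) (f x)
        rw [abs_mul] at h1
        nlinarith [abs_nonneg c, abs_nonneg (t - x),
          mul_le_mul_of_nonneg_left habs1 (abs_nonneg c)]
      have hht : |h t| ≤ |f t - f x - c*(t-x)|/(t-x)^2 + |d|/2 := by
        rw [hdef]
        simp only [if_neg ht]
        calc |(f t - f x - c*(t-x))/(t-x)^2 - d/2|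
            ≤ |(f t - f x - c*(t-x))/(t-x)^2| + |d/2| := abs_sub _ _
        _ = |f t - f x - c*(t-x)|/(t-x)^2 + |d|/2 := by
            rw [abs_div, abs_of_pos hs, abs_div]
            simp
      calc |h t| * (t-x)^2 ≤ (|f t - f x - c*(t-x)|/(t-x)^2 + |d|/2) * (t-x)^2 := by
            apply mul_le_mul_of_nonneg_right hht hs.le
      _ = |f t - f x - c*(t-x)| + |d|/2 * (t-x)^2 := by field_simp
      _ ≤ (2*M + |c|) + |d|/2 * 1 := by gcongr
      _ = C := by rw [hCdef]; ring
  have hu4 : x*(1-x) ≤ 1/4 := by nlinarith [sq_nonneg (x - 1/2)]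
  have hu0 : 0 ≤ x*(1-x) := by nlinarith
  -- the key algebraic identity for n ≥ 1
  have hkey : ∀ n : ℕ, 1 ≤ n → 2*(n:ℝ)*(bern n f x - f x) - x*(1-x)*d
      = 2*(n:ℝ) * ∑ i ∈ range (n+1), h ((i:ℝ)/n) * ((i:ℝ)/n - x)^2 * wt n i x := by
    intro n hn
    have hn0 : (n:ℝ) ≠ 0 := Nat.cast_ne_zero.mpr (by omega)
    have e : ∀ i ∈ range (n+1), (n.choose i : ℝ) * f ((i:ℝ)/n) * x^i * (1-x)^(n-i)
        = f x * wt n i x + (c/n) * (((i:ℝ) - n*x) * wt n i x)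
          + (d/(2*(n:ℝ)^2)) * ((((i:ℝ) - n*x))^2 * wt n i x)
          + h ((i:ℝ)/n) * ((i:ℝ)/n - x)^2 * wt n i x := by
      intro i _
      have ht := hrep ((i:ℝ)/n)
      have e1 : (i:ℝ) - n*x = n * ((i:ℝ)/n - x) := by field_simp
      unfold wt
      rw [e1, ht]
      field_simp
    unfold bern
    rw [Finset.sum_congr rfl e]
    simp only [Finset.sum_add_distrib, ← Finset.mul_sum]
    rw [sum_wt, central1, central2]
    field_simp
    ring
  have hm2 : ∀ n : ℕ, 1 ≤ n →
      ∑ i ∈ range (n+1), ((i:ℝ)/n - x)^2 * wt n i x = x*(1-x)/n := by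
    intro n hn
    have hn0 : (n:ℝ) ≠ 0 := Nat.cast_ne_zero.mpr (by omega)
    have e : ∀ i ∈ range (n+1), ((i:ℝ)/n - x)^2 * wt n i x
        = (1/(n:ℝ)^2) * (((i:ℝ) - n*x)^2 * wt n i x) := by
      intro i _
      have e1 : (i:ℝ) - n*x = n * ((i:ℝ)/n - x) := by field_simp
      rw [e1]; field_simp; try ring
    rw [Finset.sum_congr rfl e, ← Finset.mul_sum, central2]
    field_simp
  have hm4 : ∀ n : ℕ, 1 ≤ n →
      ∑ i ∈ range (n+1), ((i:ℝ)/n - x)^4 * wt n i x ≤ 1/(n:ℝ)^2 := by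
    intro n hn
    have hn1 : (1:ℝ) ≤ n := by exact_mod_cast hn
    have hn0 : (n:ℝ) ≠ 0 := by linarith
    have e : ∀ i ∈ range (n+1), ((i:ℝ)/n - x)^4 * wt n i x
        = (1/(n:ℝ)^4) * (((i:ℝ) - n*x)^4 * wt n i x) := by
      intro i _
      have e1 : (i:ℝ) - n*x = n * ((i:ℝ)/n - x) := by field_simp
      rw [e1]; field_simp; try ring
    rw [Finset.sum_congr rfl e, ← Finset.mul_sum, central4]
    have hA : (n:ℝ)*x*(1-x) + 3*n*((n:ℝ)-2)*x^2*(1-x)^2 ≤ (n:ℝ)^2 := by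
      have hv : (n:ℝ)*(x*(1-x)) ≤ (n:ℝ)*(1/4) :=
        mul_le_mul_of_nonneg_left hu4 (by linarith)
      have hv0 : 0 ≤ (n:ℝ)*(x*(1-x)) := mul_nonneg (by linarith) hu0
      have hvsq : ((n:ℝ)*(x*(1-x)))^2 ≤ ((n:ℝ)*(1/4))^2 := by nlinarith
      have hvu : 0 ≤ (n:ℝ)*(x*(1-x))*(x*(1-x)) := mul_nonneg hv0 hu0
      have hnn : (n:ℝ) ≤ (n:ℝ)^2 := by nlinarith
      linarith [hv, hvsq, hvu, hnn]
    calc (1/(n:ℝ)^4) * ((n:ℝ)*x*(1-x) + 3*n*((n:ℝ)-2)*x^2*(1-x)^2)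
        ≤ (1/(n:ℝ)^4) * (n:ℝ)^2 := by
          apply mul_le_mul_of_nonneg_left hA (by positivity)
    _ = 1/(n:ℝ)^2 := by field_simp
  -- now the limit
  rw [Metric.tendsto_atTop]
  intro ε hε
  obtain ⟨ε₁, hε₁def⟩ : ∃ e : ℝ, e = ε/2 := ⟨_, rfl⟩
  have hε₁ : 0 < ε₁ := by rw [hε₁def]; positivity
  -- choose δ from hlim
  have hev : ∀ᶠ t in 𝓝[≠] x, |h t| < ε₁ := by
    have := hlim (Metric.ball_mem_nhds 0 hε₁)
    filter_upwards [this] with t ht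
    simpa [Real.dist_eq] using ht
  rw [eventually_nhdsWithin_iff, Metric.eventually_nhds_iff] at hev
  obtain ⟨δ, hδpos, hδ⟩ := hev
  have hδ' : ∀ t, |t - x| < δ → |h t| ≤ ε₁ := by
    intro t ht
    by_cases htx : t = x
    · subst htx; simp [hdef]; linarith
    · exact le_of_lt (hδ (by simpa [Real.dist_eq] using ht)
        (by simp [Set.mem_compl_iff, htx]))
  -- choose N
  obtain ⟨N0, hN0⟩ := exists_nat_gt (4*C/(ε*δ^4))
  refine ⟨max N0 1, fun n hn => ?_⟩
  have hn1 : 1 ≤ n := le_trans (le_max_right N0 1) hn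
  have hnN0 : (N0:ℝ) ≤ n := by exact_mod_cast le_trans (le_max_left N0 1) hn
  have hnR : (1:ℝ) ≤ n := by exact_mod_cast hn1
  have hn0 : (n:ℝ) ≠ 0 := by linarith
  have htail : 2*C/(δ^4*(n:ℝ)) < ε/2 := by
    have h1 : 4*C/(ε*δ^4) < (n:ℝ) := lt_of_lt_of_le hN0 hnN0
    have h2 : 4*C < (n:ℝ)*(ε*δ^4) := by
      rw [div_lt_iff₀ (by positivity)] at h1
      linarith
    have hnpos : (0:ℝ) < (n:ℝ) := by linarith
    rw [div_lt_iff₀ (mul_pos (pow_pos hδpos 4) hnpos)]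
    linarith [h2]
  rw [Real.dist_eq, hkey n hn1]
  -- per-i bound
  have hper : ∀ i ∈ range (n+1),
      |h ((i:ℝ)/n) * ((i:ℝ)/n - x)^2 * wt n i x|
        ≤ (ε₁*((i:ℝ)/n - x)^2 + (C/δ^4)*((i:ℝ)/n - x)^4) * wt n i x := by
    intro i hi
    rw [Finset.mem_range] at hi
    set t : ℝ := (i:ℝ)/n with htdef
    have hti : t ∈ Set.Icc (0:ℝ) 1 := by
      constructor
      · positivity
      · rw [htdef, div_le_one (by linarith)]
        exact_mod_cast Nat.lt_succ_iff.mp hi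
    have hwt : 0 ≤ wt n i x := by
      unfold wt
      have : (0:ℝ) ≤ 1 - x := by linarith
      positivity
    rw [abs_mul, abs_mul, abs_of_nonneg hwt, abs_pow, sq_abs]
    apply mul_le_mul_of_nonneg_right _ hwt
    by_cases hlt : |t - x| < δ
    · have h1 := hδ' t hlt
      have hb1 : |h t| * (t-x)^2 ≤ ε₁ * (t-x)^2 :=
        mul_le_mul_of_nonneg_right h1 (sq_nonneg _)
      have hb2 : 0 ≤ (C/δ^4)*(t-x)^4 :=
        mul_nonneg (div_nonneg hC (by positivity)) (by positivity)
      linarith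
    · push_neg at hlt
      have h1 : δ^4 ≤ |t-x|^4 := pow_le_pow_left₀ hδpos.le hlt 4
      have h2 : |t-x|^4 = (t-x)^4 := by
        rw [pow_abs, abs_of_nonneg (by positivity : (0:ℝ) ≤ (t-x)^4)]
      rw [h2] at h1
      have h3 := hCb t hti
      have h4 : C ≤ (C/δ^4)*(t-x)^4 := by
        have := mul_le_mul_of_nonneg_left h1 (div_nonneg hC (by positivity : (0:ℝ) ≤ δ^4))
        calc C = (C/δ^4)*δ^4 := by field_simp
        _ ≤ (C/δ^4)*(t-x)^4 := this
      linarith [mul_nonneg hε₁.le (sq_nonneg (t-x))]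
  have hsum : |∑ i ∈ range (n+1), h ((i:ℝ)/n) * ((i:ℝ)/n - x)^2 * wt n i x|
      ≤ ε₁*(x*(1-x)/n) + (C/δ^4)*(1/(n:ℝ)^2) := by
    calc |∑ i ∈ range (n+1), h ((i:ℝ)/n) * ((i:ℝ)/n - x)^2 * wt n i x|
        ≤ ∑ i ∈ range (n+1), |h ((i:ℝ)/n) * ((i:ℝ)/n - x)^2 * wt n i x| :=
          Finset.abs_sum_le_sum_abs _ _
    _ ≤ ∑ i ∈ range (n+1), (ε₁*((i:ℝ)/n - x)^2 + (C/δ^4)*((i:ℝ)/n - x)^4) * wt n i x :=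
          Finset.sum_le_sum hper
    _ = ε₁ * ∑ i ∈ range (n+1), ((i:ℝ)/n - x)^2 * wt n i x
          + (C/δ^4) * ∑ i ∈ range (n+1), ((i:ℝ)/n - x)^4 * wt n i x := by
        simp only [add_mul, Finset.sum_add_distrib, Finset.mul_sum, mul_assoc]
    _ ≤ ε₁*(x*(1-x)/n) + (C/δ^4)*(1/(n:ℝ)^2) := by
        rw [hm2 n hn1]
        exact add_le_add le_rfl
          (mul_le_mul_of_nonneg_left (hm4 n hn1)
            (div_nonneg hC (le_of_lt (pow_pos hδpos 4))))
  calc |2*(n:ℝ) * ∑ i ∈ range (n+1), h ((i:ℝ)/n) * ((i:ℝ)/n - x)^2 * wt n i x|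
      ≤ 2*(n:ℝ) * (ε₁*(x*(1-x)/n) + (C/δ^4)*(1/(n:ℝ)^2)) := by
        rw [abs_mul]
        rw [abs_of_nonneg (by positivity : (0:ℝ) ≤ 2*(n:ℝ))]
        exact mul_le_mul_of_nonneg_left hsum (by positivity)
  _ = 2*ε₁*(x*(1-x)) + 2*C/(δ^4*(n:ℝ)) := by field_simp
  _ < ε := by
      have : 2*ε₁*(x*(1-x)) ≤ 2*ε₁*(1/4) := by
        apply mul_le_mul_of_nonneg_left hu4 (by positivity)
      rw [hε₁def] at this ⊢
      linarith
end

section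
/- If f \in C^p[0,1] (f has continuous derivatives up to order p on [0,1]), then the p-th derivatives of the Bernstein polynomials B_n(f) converge uniformly to f^{(p)} on [0,1]: \sup_{x\in[0,1]} |B_n^{(p)}(f;x) - f^{(p)}(x)| \to 0 as n \to \infty. -/
open Finset Polynomial

noncomputable def bpoly (n : ℕ) (c : ℕ → ℝ) : Polynomial ℝ :=
  ∑ k ∈ Finset.range (n+1), Polynomial.C (c k) * bernsteinPolynomial ℝ n k

noncomputable def funS (n : ℕ) (c : ℕ → ℝ) : ℝ → ℝ := fun x => (bpoly n c).eval x

def Dc (n : ℕ) (c : ℕ → ℝ) : ℕ → ℝ := fun k => ((n:ℝ)+1) * (c (k+1) - c k)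

def Dp (n : ℕ) : ℕ → (ℕ → ℝ) → (ℕ → ℝ)
  | 0, c => c
  | (p+1), c => Dp n p (Dc (n+p) c)

lemma bpoly_derivative (n : ℕ) (c : ℕ → ℝ) :
    Polynomial.derivative (bpoly (n+1) c) = bpoly n (Dc n c) := by
  rw [bpoly, map_sum, Finset.sum_range_succ']
  set B : ℕ → ℝ[X] := fun k => bernsteinPolynomial ℝ n k with hB
  set N1 : ℝ[X] := (n:ℝ[X]) + 1 with hN1
  have h0 : Polynomial.derivative (Polynomial.C (c 0) * bernsteinPolynomial ℝ (n+1) 0)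
      = -(N1 * Polynomial.C (c 0) * B 0) := by
    rw [Polynomial.derivative_C_mul, bernsteinPolynomial.derivative_zero]
    simp only [hB, hN1]
    push_cast
    ring
  have hsucc : ∀ i, Polynomial.derivative
        (Polynomial.C (c (i+1)) * bernsteinPolynomial ℝ (n+1) (i+1))
      = N1 * Polynomial.C (c (i+1)) * B i - N1 * Polynomial.C (c (i+1)) * B (i+1) := by
    intro i
    rw [Polynomial.derivative_C_mul, bernsteinPolynomial.derivative_succ]
    simp only [hB, hN1]
    push_cast
    ring
  simp only [hsucc, h0]
  have expand : bpoly n (Dc n c)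
      = ∑ k ∈ Finset.range (n+1),
          (N1 * Polynomial.C (c (k+1)) * B k - N1 * Polynomial.C (c k) * B k) := by
    rw [bpoly]
    apply Finset.sum_congr rfl
    intro k _
    simp only [Dc, map_mul, map_sub, map_add, map_natCast, map_one, hB, hN1]
    push_cast
    ring
  rw [expand]
  have tele : ∑ i ∈ Finset.range (n+1), N1 * Polynomial.C (c (i+1)) * B (i+1)
        + N1 * Polynomial.C (c 0) * B 0
      = ∑ i ∈ Finset.range (n+1), N1 * Polynomial.C (c i) * B i := by
    rw [← Finset.sum_range_succ' (fun i => N1 * Polynomial.C (c i) * B i) (n+1),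
      Finset.sum_range_succ]
    have : B (n+1) = 0 := bernsteinPolynomial.eq_zero_of_lt ℝ (Nat.lt_succ_self n)
    simp [this]
  rw [Finset.sum_sub_distrib, Finset.sum_sub_distrib]
  linear_combination (-1 : ℝ[X]) * tele

lemma deriv_funS (n : ℕ) (c : ℕ → ℝ) : deriv (funS (n+1) c) = funS n (Dc n c) := by
  funext x
  rw [show funS (n+1) c = fun y => (bpoly (n+1) c).eval y from rfl]
  rw [Polynomial.deriv, bpoly_derivative]
  rfl

lemma iteratedDeriv_funS (p : ℕ) : ∀ (n : ℕ) (c : ℕ → ℝ),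
    iteratedDeriv p (funS (n+p) c) = funS n (Dp n p c) := by
  induction p with
  | zero => intro n c; simp [iteratedDeriv_zero, Dp]
  | succ p IH =>
    intro n c
    rw [iteratedDeriv_succ', show n + (p+1) = (n+p) + 1 from rfl, deriv_funS, IH]
    rfl
def fdiff (h : ℝ) (g : ℝ → ℝ) : ℝ → ℝ := fun t => g (t + h) - g t

lemma Dp_smul (n : ℕ) (p : ℕ) : ∀ (a : ℝ) (c : ℕ → ℝ),
    Dp n p (fun k => a * c k) = fun k => a * Dp n p c k := by
  induction p with
  | zero => intro a c; rfl
  | succ p IH =>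
    intro a c
    show Dp n p (Dc (n+p) fun k => a * c k) = _
    have : (Dc (n+p) fun k => a * c k) = fun k => a * Dc (n+p) c k := by
      funext k; simp only [Dc]; ring
    rw [this, IH]
    rfl

lemma Dp_grid (h : ℝ) (p : ℕ) : ∀ (n : ℕ) (g : ℝ → ℝ),
    Dp n p (fun k : ℕ => g ((k:ℝ) * h)) =
      fun k : ℕ => (∏ j ∈ Finset.range p, ((n+j+1 : ℕ) : ℝ)) * (fdiff h)^[p] g ((k:ℝ) * h) := by
  induction p with
  | zero => intro n g; funext k; simp [Dp]
  | succ p IH =>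
    intro n g
    show Dp n p (Dc (n+p) fun k : ℕ => g ((k:ℝ) * h)) = _
    have h1 : (Dc (n+p) fun k : ℕ => g ((k:ℝ) * h)) = fun k : ℕ => ((n+p+1 : ℕ) : ℝ) * (fdiff h g) ((k:ℝ) * h) := by
      funext k
      simp only [Dc, fdiff]
      push_cast
      ring_nf
    rw [h1, Dp_smul, IH]
    funext k
    rw [Finset.prod_range_succ, Function.iterate_succ_apply]
    push_cast
    ring
open Set

lemma iterDW_mono (q : ℕ) {g : ℝ → ℝ} {s t : Set ℝ} (hst : s ⊆ t)
    (hs : UniqueDiffOn ℝ s) (ht : UniqueDiffOn ℝ t)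
    (hg : ContDiffOn ℝ q g t) : ∀ {x}, x ∈ s →
    iteratedDerivWithin q g s x = iteratedDerivWithin q g t x := by
  induction q with
  | zero => intro x _; simp
  | succ q IH =>
    intro x hx
    have hgq : ContDiffOn ℝ q g t := hg.of_le (by exact_mod_cast Nat.le_succ q)
    rw [iteratedDerivWithin_succ, iteratedDerivWithin_succ]
    have hcongr : derivWithin (iteratedDerivWithin q g s) s x
        = derivWithin (iteratedDerivWithin q g t) s x :=
      derivWithin_congr (fun y hy => IH hgq hy) (IH hgq hx)
    rw [hcongr]
    have hd : DifferentiableWithinAt ℝ (iteratedDerivWithin q g t) t x :=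
      hg.differentiableOn_iteratedDerivWithin (by exact_mod_cast Nat.lt_succ_self q) ht x (hst hx)
    exact (hd.hasDerivWithinAt.mono hst).derivWithin (hs x hx)

lemma iterDW_shift (q : ℕ) (g : ℝ → ℝ) (h u v : ℝ) (huv : u < v - h) (hh : 0 < h)
    (hg : ContDiffOn ℝ q g (Set.Icc (u+h) v)) :
    ∀ {x}, x ∈ Set.Icc u (v-h) →
    iteratedDerivWithin q (fun s => g (s+h)) (Set.Icc u (v-h)) x
      = iteratedDerivWithin q g (Set.Icc (u+h) v) (x+h) := by
  have huv2 : u + h < v := by linarith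
  have hs : UniqueDiffOn ℝ (Set.Icc u (v-h)) := uniqueDiffOn_Icc huv
  have ht : UniqueDiffOn ℝ (Set.Icc (u+h) v) := uniqueDiffOn_Icc huv2
  have hmaps : Set.MapsTo (fun y => y + h) (Set.Icc u (v-h)) (Set.Icc (u+h) v) := by
    intro y hy
    simp only [Set.mem_Icc] at hy ⊢
    constructor <;> linarith [hy.1, hy.2]
  induction q with
  | zero => intro x _; simp
  | succ q IH =>
    intro x hx
    have hgq : ContDiffOn ℝ q g (Set.Icc (u+h) v) := hg.of_le (by exact_mod_cast Nat.le_succ q)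
    rw [iteratedDerivWithin_succ, iteratedDerivWithin_succ]
    have hcongr : derivWithin (iteratedDerivWithin q (fun s => g (s+h)) (Set.Icc u (v-h)))
          (Set.Icc u (v-h)) x
        = derivWithin (fun y => iteratedDerivWithin q g (Set.Icc (u+h) v) (y+h))
          (Set.Icc u (v-h)) x :=
      derivWithin_congr (fun y hy => IH hgq hy) (IH hgq hx)
    rw [hcongr]
    have hd : DifferentiableWithinAt ℝ (iteratedDerivWithin q g (Set.Icc (u+h) v))
        (Set.Icc (u+h) v) (x+h) :=
      hg.differentiableOn_iteratedDerivWithin (by exact_mod_cast Nat.lt_succ_self q) ht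
        (x+h) (hmaps hx)
    have hinner : HasDerivWithinAt (fun y : ℝ => y + h) 1 (Set.Icc u (v-h)) x :=
      (hasDerivWithinAt_id x _).add_const h
    have hcomp := HasDerivWithinAt.comp x
      hd.hasDerivWithinAt hinner hmaps
    rw [mul_one] at hcomp
    exact hcomp.derivWithin (hs x hx)

/-- Mean value theorem for iterated finite differences. -/
lemma fd_mvt : ∀ (q : ℕ) (g : ℝ → ℝ) (v t : ℝ) {u h : ℝ},
    ContDiffOn ℝ q g (Set.Icc u v) → 0 < h → u ≤ t → t + q*h ≤ v →
    ∃ ξ ∈ Set.Icc t (t + q*h),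
      (fdiff h)^[q] g t = h^q * iteratedDerivWithin q g (Set.Icc u v) ξ := by
  intro q
  induction q with
  | zero =>
    intro g v t u h _ _ hut _
    exact ⟨t, by simp, by simp⟩
  | succ q IH =>
    intro g v t u h hg hh hut htv
    push_cast at htv
    have hqh : 0 ≤ (q:ℝ) * h := by positivity
    have htv' : t + q*h ≤ v - h := by linarith
    have huvh : u ≤ v - h := by linarith
    set G : ℝ → ℝ := fun s => g (s+h) - g s with hG
    have hmono : Set.Icc u (v-h) ⊆ Set.Icc u v := Set.Icc_subset_Icc le_rfl (by linarith)
    have hmono2 : Set.Icc (u+h) v ⊆ Set.Icc u v := Set.Icc_subset_Icc (by linarith) le_rfl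
    have hgq : ContDiffOn ℝ q g (Set.Icc u v) := hg.of_le (by exact_mod_cast Nat.le_succ q)
    have hshift : ContDiffOn ℝ q (fun s => g (s+h)) (Set.Icc u (v-h)) := by
      apply ContDiffOn.comp (hgq.mono hmono2)
        ((contDiff_id.add contDiff_const).contDiffOn)
      intro y hy
      exact ⟨by simp; linarith [hy.1], by simp; linarith [hy.2]⟩
    have hGq : ContDiffOn ℝ q G (Set.Icc u (v-h)) := hshift.sub (hgq.mono hmono)
    obtain ⟨ξ, hξmem, hξ⟩ := IH G (v-h) t hGq hh hut htv'
    have hξu : u ≤ ξ := le_trans hut hξmem.1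
    have hξv : ξ + h ≤ v := by
      have := hξmem.2; linarith
    -- rewrite the iterated derivative of G
    have hE : iteratedDerivWithin q G (Set.Icc u (v-h)) ξ
        = iteratedDerivWithin q g (Set.Icc u v) (ξ+h)
          - iteratedDerivWithin q g (Set.Icc u v) ξ := by
      rcases Nat.eq_zero_or_pos q with hq | hq
      · subst hq; simp [hG]
      · have huvh' : u < v - h := by
          have : 0 < (q:ℝ) * h := by positivity
          linarith
        have hs' : UniqueDiffOn ℝ (Set.Icc u (v-h)) := uniqueDiffOn_Icc huvh'
        have hξs : ξ ∈ Set.Icc u (v-h) := ⟨hξu, le_trans hξmem.2 htv'⟩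
        have hsub : iteratedDerivWithin q G (Set.Icc u (v-h)) ξ
            = iteratedDerivWithin q (fun s => g (s+h)) (Set.Icc u (v-h)) ξ
              - iteratedDerivWithin q g (Set.Icc u (v-h)) ξ := by
          have := iteratedDerivWithin_sub hξs hs' (hshift ξ hξs) (hgq.mono hmono ξ hξs)
          simpa [hG, Pi.sub_def] using this
        rw [hsub,
          iterDW_shift q g h u v huvh' hh (hgq.mono hmono2) hξs,
          iterDW_mono q hmono hs' (uniqueDiffOn_Icc (by linarith : u < v)) hgq hξs,
          iterDW_mono q hmono2 (uniqueDiffOn_Icc (by linarith : u+h < v))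
            (uniqueDiffOn_Icc (by linarith : u < v)) hgq ⟨by linarith, hξv⟩]
    -- mean value theorem on the q-th derivative
    set φ := iteratedDerivWithin q g (Set.Icc u v) with hφ
    have huv : u < v := by linarith
    have hφc : ContinuousOn φ (Set.Icc ξ (ξ+h)) :=
      (hg.continuousOn_iteratedDerivWithin (by exact_mod_cast Nat.le_succ q)
        (uniqueDiffOn_Icc huv)).mono (Set.Icc_subset_Icc hξu hξv)
    have hφd : ∀ y ∈ Set.Ioo ξ (ξ+h),
        HasDerivAt φ (iteratedDerivWithin (q+1) g (Set.Icc u v) y) y := by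
      intro y hy
      have hyuv : y ∈ Set.Ioo u v := ⟨lt_of_le_of_lt hξu hy.1, lt_of_lt_of_le hy.2 hξv⟩
      have hyIcc : y ∈ Set.Icc u v := Set.Ioo_subset_Icc_self hyuv
      have hd : DifferentiableWithinAt ℝ φ (Set.Icc u v) y :=
        hg.differentiableOn_iteratedDerivWithin (by exact_mod_cast Nat.lt_succ_self q)
          (uniqueDiffOn_Icc huv) y hyIcc
      have h1 : HasDerivWithinAt φ (derivWithin φ (Set.Icc u v) y) (Set.Icc u v) y :=
        hd.hasDerivWithinAt
      rw [← iteratedDerivWithin_succ] at h1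
      exact h1.hasDerivAt (Icc_mem_nhds hyuv.1 hyuv.2)
    obtain ⟨ξ', hξ'mem, hξ'⟩ := exists_hasDerivAt_eq_slope φ _
      (by linarith : ξ < ξ + h) hφc hφd
    refine ⟨ξ', ⟨le_trans hξmem.1 hξ'mem.1.le, ?_⟩, ?_⟩
    · push_cast
      have := hξ'mem.2
      have := hξmem.2
      linarith
    · have hslope : φ (ξ+h) - φ ξ = h * iteratedDerivWithin (q+1) g (Set.Icc u v) ξ' := by
        rw [hξ', add_sub_cancel_left]
        field_simp
      rw [Function.iterate_succ_apply]
      have hfd : fdiff h g = G := rfl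
      rw [hfd, hξ, hE, hslope]
      ring
lemma eval_bp_nonneg (n k : ℕ) {x : ℝ} (hx : x ∈ Set.Icc (0:ℝ) 1) :
    0 ≤ (bernsteinPolynomial ℝ n k).eval x := by
  simp only [bernsteinPolynomial, Polynomial.eval_mul, Polynomial.eval_pow,
    Polynomial.eval_natCast, Polynomial.eval_sub, Polynomial.eval_one, Polynomial.eval_X]
  have h1 := hx.1
  have h2 := hx.2
  exact mul_nonneg (mul_nonneg (Nat.cast_nonneg _) (pow_nonneg h1 _))
    (pow_nonneg (by linarith) _)

lemma eval_bp_sum (n : ℕ) (x : ℝ) :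
    ∑ k ∈ Finset.range (n+1), (bernsteinPolynomial ℝ n k).eval x = 1 := by
  rw [← Polynomial.eval_finset_sum, bernsteinPolynomial.sum, Polynomial.eval_one]

lemma funS_apply (n : ℕ) (c : ℕ → ℝ) (x : ℝ) :
    funS n c x = ∑ k ∈ Finset.range (n+1), c k * (bernsteinPolynomial ℝ n k).eval x := by
  show (bpoly n c).eval x = _
  rw [bpoly, Polynomial.eval_finset_sum]
  exact Finset.sum_congr rfl fun k _ => by rw [Polynomial.eval_mul, Polynomial.eval_C]

lemma bern_eq_funS (n : ℕ) (f : ℝ → ℝ) : bern n f = funS n (fun k => f ((k:ℝ)/(n:ℝ))) := by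
  funext x
  rw [bern, funS_apply]
  apply Finset.sum_congr rfl
  intro k _
  simp only [bernsteinPolynomial, Polynomial.eval_mul, Polynomial.eval_pow,
    Polynomial.eval_natCast, Polynomial.eval_sub, Polynomial.eval_one, Polynomial.eval_X]
  ring

lemma bernstein_approx (g : ℝ → ℝ) (hg : ContinuousOn g (Set.Icc 0 1)) {ε : ℝ} (hε : 0 < ε) :
    ∃ n₀ : ℕ, ∀ n ≥ n₀, ∀ x ∈ Set.Icc (0:ℝ) 1,
      |g x - ∑ k ∈ Finset.range (n+1), g ((k:ℝ)/(n:ℝ)) * (bernsteinPolynomial ℝ n k).eval x|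
        < ε := by
  let G : C(unitInterval, ℝ) := ⟨Set.restrict _ g, hg.restrict⟩
  have hB := bernsteinApproximation_uniform G
  rw [Metric.tendsto_atTop] at hB
  obtain ⟨n₀, hn₀⟩ := hB ε hε
  refine ⟨n₀, fun n hn x hx => ?_⟩
  set x' : unitInterval := ⟨x, hx⟩ with hx'
  have happ : bernsteinApproximation n G x'
      = ∑ k ∈ Finset.range (n+1), g ((k:ℝ)/(n:ℝ)) * (bernsteinPolynomial ℝ n k).eval x := by
    rw [bernsteinApproximation.apply]
    rw [Finset.sum_range (fun k => g ((k:ℝ)/(n:ℝ)) * (bernsteinPolynomial ℝ n k).eval x)]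
    apply Finset.sum_congr rfl
    intro k _
    have h1 : G (bernstein.z k) = g ((k:ℝ)/(n:ℝ)) := rfl
    have h2 : bernstein n (k:ℕ) x' = (bernsteinPolynomial ℝ n (k:ℕ)).eval x := by
      simp [bernstein, Polynomial.toContinuousMapOn_apply, Polynomial.toContinuousMap_apply, hx']
    rw [h1, h2]
    exact (smul_eq_mul _ _).trans (mul_comm _ _)
  have hd := ContinuousMap.dist_apply_le_dist (f := bernsteinApproximation n G) (g := G) x'
  have hG : G x' = g x := rfl
  have : dist (bernsteinApproximation n G x') (G x') < ε := lt_of_le_of_lt hd (hn₀ n hn)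
  rw [happ, hG, Real.dist_eq] at this
  rw [abs_sub_comm]
  exact this

lemma factor_bound (n p : ℕ) (hn : 0 < n) :
    |(∏ j ∈ Finset.range p, ((n+j+1 : ℕ):ℝ)) * (1/((n+p : ℕ):ℝ))^p - 1|
      ≤ (p:ℝ)^2/((n+p:ℕ):ℝ) := by
  have hN : (0:ℝ) < ((n+p:ℕ):ℝ) := by
    have : 0 < n + p := by omega
    exact_mod_cast this
  set N := ((n+p:ℕ):ℝ) with hNdef
  have hprod : (∏ j ∈ Finset.range p, ((n+j+1 : ℕ):ℝ)) * (1/N)^p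
      = ∏ j ∈ Finset.range p, ((n+j+1:ℕ):ℝ)/N := by
    rw [Finset.prod_div_distrib, Finset.prod_const]
    field_simp
    simp [Finset.card_range, ← mul_pow, hN.ne']
  rw [hprod]
  have upper : ∏ j ∈ Finset.range p, ((n+j+1:ℕ):ℝ)/N ≤ 1 := by
    apply Finset.prod_le_one
    · intro j _; positivity
    · intro j hj
      rw [div_le_one hN]
      have h5 : n + j + 1 ≤ n + p := by
        have := Finset.mem_range.mp hj; omega
      rw [hNdef]
      exact_mod_cast h5
  have lower : 1 - (p:ℝ)^2/N ≤ ∏ j ∈ Finset.range p, ((n+j+1:ℕ):ℝ)/N := by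
    have hge : (((n:ℝ)+1)/N)^p ≤ ∏ j ∈ Finset.range p, ((n+j+1:ℕ):ℝ)/N := by
      have hc : ∏ _x ∈ Finset.range p, ((n:ℝ)+1)/N = (((n:ℝ)+1)/N)^p := by
        rw [Finset.prod_const, Finset.card_range]
      rw [← hc]
      apply Finset.prod_le_prod
      · intro j _; positivity
      · intro j _
        exact (div_le_div_iff_of_pos_right hN).mpr (by push_cast; linarith)
    have hx2 : -2 ≤ ((n:ℝ)+1)/N - 1 := by
      have : (0:ℝ) ≤ ((n:ℝ)+1)/N := by positivity
      linarith
    have hb := one_add_mul_le_pow hx2 p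
    have heq : 1 + (((n:ℝ)+1)/N - 1) = ((n:ℝ)+1)/N := by ring
    rw [heq] at hb
    have hNr : N = (n:ℝ) + p := by rw [hNdef]; push_cast; ring
    have he2 : ((n:ℝ)+1)/N - 1 = (1 - (p:ℝ))/N := by
      rw [hNr]
      field_simp
      ring
    have h9 : (-(p:ℝ)^2)/N ≤ ((p:ℝ)*(1-(p:ℝ)))/N := by
      gcongr
      nlinarith [sq_nonneg (p:ℝ)]
    have h10 : 1 + (p:ℝ) * (((n:ℝ)+1)/N - 1) = 1 + ((p:ℝ)*(1-(p:ℝ)))/N := by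
      rw [he2]; ring
    have h11 : 1 - (p:ℝ)^2/N = 1 + (-(p:ℝ)^2)/N := by ring
    linarith [hge, hb]
  have hB : (0:ℝ) ≤ (p:ℝ)^2/N := by positivity
  rw [abs_le]
  constructor <;> linarith

set_option maxHeartbeats 1000000 in
/-- If `f ∈ Cᵖ[0,1]`, then the `p`-th derivatives of the Bernstein polynomials
converge uniformly on `[0,1]` to the `p`-th derivative of `f`. -/
theorem bernstein_deriv_uniform_convergence (p : ℕ) (f : ℝ → ℝ)
    (hf : ContDiffOn ℝ p f (Set.Icc 0 1)) :
    TendstoUniformlyOn (fun n x => iteratedDeriv p (bern n f) x)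
      (fun x => iteratedDerivWithin p f (Set.Icc 0 1) x)
      Filter.atTop (Set.Icc 0 1) := by
  rw [Metric.tendstoUniformlyOn_iff]
  intro ε hε
  set g : ℝ → ℝ := fun x => iteratedDerivWithin p f (Set.Icc 0 1) x with hgdef
  have huD : UniqueDiffOn ℝ (Set.Icc (0:ℝ) 1) := uniqueDiffOn_Icc one_pos
  have hgc : ContinuousOn g (Set.Icc 0 1) :=
    hf.continuousOn_iteratedDerivWithin le_rfl huD
  obtain ⟨M₀, hM₀⟩ := isCompact_Icc.exists_bound_of_continuousOn hgc
  set M := max M₀ 1 with hMdef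
  have hM1 : (0:ℝ) < M := lt_of_lt_of_le one_pos (le_max_right _ _)
  have hM : ∀ y ∈ Set.Icc (0:ℝ) 1, |g y| ≤ M := fun y hy =>
    le_trans (by simpa using hM₀ y hy) (le_max_left _ _)
  have hUC := isCompact_Icc.uniformContinuousOn_of_continuous hgc
  rw [Metric.uniformContinuousOn_iff] at hUC
  obtain ⟨δ, hδpos, hδ⟩ := hUC (ε/4) (by linarith)
  obtain ⟨n₀, hn₀⟩ := bernstein_approx g hgc (show (0:ℝ) < ε/4 by linarith)
  have hev1 : ∀ᶠ N : ℕ in Filter.atTop, ((p:ℝ)^2 * M)/(N:ℝ) < ε/4 :=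
    (tendsto_const_div_atTop_nhds_zero_nat ((p:ℝ)^2*M)).eventually
      (gt_mem_nhds (by linarith))
  have hev2 : ∀ᶠ N : ℕ in Filter.atTop, (2*(p:ℝ))/(N:ℝ) < δ :=
    (tendsto_const_div_atTop_nhds_zero_nat (2*(p:ℝ))).eventually (gt_mem_nhds hδpos)
  filter_upwards [hev1, hev2, Filter.eventually_ge_atTop (n₀ + p + 1)] with N h1 h2 h3
  intro x hx
  -- setup
  set n := N - p with hndef
  have hNn : N = n + p := (Nat.sub_add_cancel (by omega)).symm
  have hn1 : 1 ≤ n := by omega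
  have hnn0 : n₀ ≤ n := by omega
  have hNpos : (0:ℝ) < (N:ℝ) := by
    have : 0 < N := by omega
    exact_mod_cast this
  have hnpos : (0:ℝ) < (n:ℝ) := by exact_mod_cast hn1
  set h : ℝ := 1/(N:ℝ) with hhdef
  have hhpos : 0 < h := by positivity
  have hNr : (N:ℝ) = (n:ℝ) + (p:ℝ) := by rw [hNn]; push_cast; ring
  have hNh : (N:ℝ) * h = 1 := by rw [hhdef]; field_simp
  -- representation of the iterated derivative
  set c : ℕ → ℝ := Dp n p (fun k : ℕ => f ((k:ℝ) * h)) with hcdef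
  have hrep : iteratedDeriv p (bern N f) = funS n c := by
    have hb : bern N f = funS (n + p) (fun k : ℕ => f ((k:ℝ) * h)) := by
      rw [← hNn, bern_eq_funS]
      congr 1
      funext k
      rw [hhdef]
      congr 1
      field_simp
    rw [hb, iteratedDeriv_funS, hcdef]
  set r : ℝ := ∏ j ∈ Finset.range p, ((n+j+1 : ℕ):ℝ) with hrdef
  set a : ℝ := r * h^p with hadef
  have hfact : |a - 1| ≤ (p:ℝ)^2/(N:ℝ) := by
    have hfb := factor_bound n p (by omega)
    rw [← hNn] at hfb
    rw [hadef, hrdef, hhdef]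
    exact hfb
  have hgrid : c = fun k : ℕ => r * (fdiff h)^[p] f ((k:ℝ) * h) := by
    rw [hcdef, Dp_grid, hrdef]
  -- per-coefficient estimate
  have hkey : ∀ k ∈ Finset.range (n+1), |g ((k:ℝ)/(n:ℝ)) - c k| ≤ ε/2 := by
    intro k hk
    have hkn : k ≤ n := by
      have := Finset.mem_range.mp hk; omega
    have hknr : (k:ℝ) ≤ (n:ℝ) := by exact_mod_cast hkn
    have hkh0 : (0:ℝ) ≤ (k:ℝ)*h := by positivity
    have hcond : (k:ℝ)*h + (p:ℝ)*h ≤ 1 := by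
      have hle : ((k:ℝ) + (p:ℝ)) * h ≤ (N:ℝ) * h := by
        apply mul_le_mul_of_nonneg_right _ hhpos.le
        rw [hNr]; linarith
      rw [hNh] at hle
      have hexp : (k:ℝ)*h + (p:ℝ)*h = ((k:ℝ) + (p:ℝ))*h := by ring
      linarith
    obtain ⟨ξ, hξmem, hξ⟩ := fd_mvt p f 1 ((k:ℝ)*h) hf hhpos hkh0 hcond
    have hξ01 : ξ ∈ Set.Icc (0:ℝ) 1 :=
      ⟨le_trans hkh0 hξmem.1, le_trans hξmem.2 hcond⟩
    have hknIcc : (k:ℝ)/(n:ℝ) ∈ Set.Icc (0:ℝ) 1 :=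
      ⟨by positivity, by rw [div_le_one hnpos]; exact hknr⟩
    have hph : (p:ℝ)*h = (p:ℝ)/(N:ℝ) := by rw [hhdef]; ring
    -- |k/n - ξ| ≤ 2p/N
    have e3a : (k:ℝ)*h ≤ (k:ℝ)/(n:ℝ) := by
      rw [hhdef, mul_one_div, div_le_div_iff₀ hNpos hnpos]
      have hnN : (n:ℝ) ≤ (N:ℝ) := by rw [hNr]; linarith [Nat.cast_nonneg (α := ℝ) p]
      have hk0 : (0:ℝ) ≤ (k:ℝ) := Nat.cast_nonneg k
      nlinarith [mul_le_mul_of_nonneg_left hnN hk0]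
    have e3b : (k:ℝ)/(n:ℝ) ≤ (k:ℝ)*h + (p:ℝ)*h := by
      rw [hph, hhdef, mul_one_div, ← add_div, div_le_div_iff₀ hnpos hNpos]
      rw [hNr]
      have hpk : (p:ℝ)*(k:ℝ) ≤ (p:ℝ)*(n:ℝ) :=
        mul_le_mul_of_nonneg_left hknr (Nat.cast_nonneg p)
      nlinarith [hpk]
    have hdist : |(k:ℝ)/(n:ℝ) - ξ| ≤ 2*(p:ℝ)/(N:ℝ) := by
      have heq : 2*(p:ℝ)/(N:ℝ) = 2*((p:ℝ)*h) := by rw [hph]; ring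
      rw [heq, abs_le]
      have e1 := hξmem.1
      have e2 := hξmem.2
      have hp0 : (0:ℝ) ≤ (p:ℝ)*h := by positivity
      constructor <;> linarith [e3a, e3b, e1, e2, hp0]
    have hgd : |g ((k:ℝ)/(n:ℝ)) - g ξ| < ε/4 := by
      have := hδ ((k:ℝ)/(n:ℝ)) hknIcc ξ hξ01 (by
        rw [Real.dist_eq]; exact lt_of_le_of_lt hdist h2)
      rwa [Real.dist_eq] at this
    have hval : c k = a * g ξ := by
      rw [hgrid]
      simp only
      rw [hξ, hadef, hgdef]
      ring
    have hMg : |g ξ| ≤ M := hM ξ hξ01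
    have hfgW : |g ξ - a * g ξ| ≤ M * ((p:ℝ)^2/(N:ℝ)) := by
      have : g ξ - a * g ξ = g ξ * (1 - a) := by ring
      rw [this, abs_mul, abs_sub_comm]
      exact mul_le_mul hMg hfact (abs_nonneg _) hM1.le
    have hMN : M * ((p:ℝ)^2/(N:ℝ)) < ε/4 := by
      have : M * ((p:ℝ)^2/(N:ℝ)) = ((p:ℝ)^2 * M)/(N:ℝ) := by ring
      rw [this]; exact h1
    calc |g ((k:ℝ)/(n:ℝ)) - c k|
        = |g ((k:ℝ)/(n:ℝ)) - a * g ξ| := by rw [hval]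
      _ ≤ |g ((k:ℝ)/(n:ℝ)) - g ξ| + |g ξ - a * g ξ| := by
          have : g ((k:ℝ)/(n:ℝ)) - a * g ξ
              = (g ((k:ℝ)/(n:ℝ)) - g ξ) + (g ξ - a * g ξ) := by ring
          rw [this]; exact abs_add_le _ _
      _ ≤ ε/4 + ε/4 := by
          have := le_trans hfgW hMN.le
          linarith
      _ = ε/2 := by ring
  -- sum estimates
  have hsum1 : ∑ k ∈ Finset.range (n+1), (bernsteinPolynomial ℝ n k).eval x = 1 :=
    eval_bp_sum n x
  have hEpos : ∀ k, 0 ≤ (bernsteinPolynomial ℝ n k).eval x := fun k =>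
    eval_bp_nonneg n k hx
  have hBapp := hn₀ n hnn0 x hx
  have hsumbd : |(∑ k ∈ Finset.range (n+1), g ((k:ℝ)/(n:ℝ)) * (bernsteinPolynomial ℝ n k).eval x)
      - funS n c x| ≤ ε/2 := by
    rw [funS_apply, ← Finset.sum_sub_distrib]
    calc |∑ k ∈ Finset.range (n+1),
          (g ((k:ℝ)/(n:ℝ)) * (bernsteinPolynomial ℝ n k).eval x
            - c k * (bernsteinPolynomial ℝ n k).eval x)|
        ≤ ∑ k ∈ Finset.range (n+1),
          |(g ((k:ℝ)/(n:ℝ)) - c k) * (bernsteinPolynomial ℝ n k).eval x| := by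
          refine le_trans (le_of_eq ?_) (Finset.abs_sum_le_sum_abs _ _)
          congr 1
          apply Finset.sum_congr rfl
          intro k _
          ring_nf
      _ ≤ ∑ k ∈ Finset.range (n+1), (ε/2) * (bernsteinPolynomial ℝ n k).eval x := by
          apply Finset.sum_le_sum
          intro k hk
          rw [abs_mul, abs_of_nonneg (hEpos k)]
          exact mul_le_mul_of_nonneg_right (hkey k hk) (hEpos k)
      _ = ε/2 := by rw [← Finset.mul_sum, hsum1, mul_one]
  -- conclusion
  show dist (g x) (iteratedDeriv p (bern N f) x) < ε
  rw [hrep, Real.dist_eq]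
  calc |g x - funS n c x|
      ≤ |g x - ∑ k ∈ Finset.range (n+1), g ((k:ℝ)/(n:ℝ)) * (bernsteinPolynomial ℝ n k).eval x|
        + |(∑ k ∈ Finset.range (n+1), g ((k:ℝ)/(n:ℝ)) * (bernsteinPolynomial ℝ n k).eval x)
          - funS n c x| := abs_sub_le _ _ _
    _ < ε/4 + ε/2 := by
        apply add_lt_add_of_lt_of_le hBapp hsumbd
    _ < ε := by linarith
end

section
/- Let m-1 \leq \alpha < m and f \in C^m[0,1]. Then the right Caputo fractional derivatives of the Bernstein polynomials of f converge uniformly on [0,1] to the right Caputo fractional derivative of f: \sup_{x\in[0,1]} |{}^C_xD_1^\alpha B_n(f;x) - {}^C_xD_1^\alpha f(x)| \to 0 as n \to \infty. -/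
open Set Filter MeasureTheory intervalIntegral Finset
open scoped Topology unitInterval

/-- The right Caputo fractional derivative of order `α` (with `m - 1 ≤ α < m`)
based at `1` (derivatives taken within `[0,1]`). -/
noncomputable def caputoRight (m : ℕ) (α : ℝ) (f : ℝ → ℝ) (x : ℝ) : ℝ :=
  ((-1 : ℝ) ^ m / Real.Gamma ((m : ℝ) - α)) *
    ∫ τ in x..(1 : ℝ), (τ - x) ^ ((m : ℝ) - α - 1) * iteratedDerivWithin m f (Set.Icc 0 1) τ

noncomputable def bsum (n : ℕ) (g : ℕ → ℝ) (x : ℝ) : ℝ :=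
  ∑ k ∈ Finset.range (n + 1), g k * (n.choose k : ℝ) * x ^ k * (1 - x) ^ (n - k)

def fd (g : ℕ → ℝ) : ℕ → ℝ := fun k => g (k + 1) - g k

def Dh (h : ℝ) (F : ℝ → ℝ) : ℝ → ℝ := fun x => F (x + h) - F x

lemma contDiff_bsum (n : ℕ) (g : ℕ → ℝ) (N : ℕ) : ContDiff ℝ N (bsum n g) := by
  unfold bsum
  apply ContDiff.sum
  intro k _
  fun_prop

lemma bsum_deriv_identity (n : ℕ) (hn : 1 ≤ n) (g : ℕ → ℝ) (x : ℝ) :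
    (n : ℝ) * bsum (n - 1) (fd g) x
      = ∑ k ∈ Finset.range (n + 1),
        (g k * (n.choose k : ℝ) * ((k : ℝ) * x ^ (k - 1) * (1 - x) ^ (n - k))
          - g k * (n.choose k : ℝ) * (((n - k : ℕ) : ℝ) * x ^ k * (1 - x) ^ (n - k - 1))) := by
  rw [Finset.sum_sub_distrib]
  have hA : ∑ k ∈ Finset.range (n + 1),
      g k * (n.choose k : ℝ) * ((k : ℝ) * x ^ (k - 1) * (1 - x) ^ (n - k))
      = ∑ k ∈ Finset.range n,
        (n : ℝ) * ((n-1).choose k : ℝ) * g (k+1) * x ^ k * (1 - x) ^ (n - 1 - k) := by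
    rw [Finset.sum_range_succ']
    simp only [Nat.cast_zero, zero_mul, mul_zero, add_zero]
    apply Finset.sum_congr rfl
    intro k _
    have hc : (n : ℝ) * ((n-1).choose k : ℝ) = (n.choose (k+1) : ℝ) * ((k : ℝ) + 1) := by
      have := Nat.add_one_mul_choose_eq (n - 1) k
      rw [Nat.sub_add_cancel hn] at this
      exact_mod_cast congrArg (Nat.cast : ℕ → ℝ) this
    have he : n - (k + 1) = n - 1 - k := by omega
    rw [he]
    push_cast
    linear_combination (-(x ^ k * (1 - x) ^ (n - 1 - k) * g (k + 1))) * hc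
  have hB : ∑ k ∈ Finset.range (n + 1),
      g k * (n.choose k : ℝ) * (((n - k : ℕ) : ℝ) * x ^ k * (1 - x) ^ (n - k - 1))
      = ∑ k ∈ Finset.range n,
        (n : ℝ) * ((n-1).choose k : ℝ) * g k * x ^ k * (1 - x) ^ (n - 1 - k) := by
    rw [Finset.sum_range_succ]
    simp only [Nat.sub_self, Nat.cast_zero, zero_mul, mul_zero, add_zero]
    apply Finset.sum_congr rfl
    intro k hk
    rw [Finset.mem_range] at hk
    have hc : (n : ℝ) * ((n-1).choose k : ℝ) = (n.choose k : ℝ) * ((n - k : ℕ) : ℝ) := by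
      have h0 := Nat.choose_mul_succ_eq (n - 1) k
      rw [Nat.sub_add_cancel hn] at h0
      have h1 : n * (n-1).choose k = n.choose k * (n - k) := by rw [mul_comm]; exact h0
      exact_mod_cast congrArg (Nat.cast : ℕ → ℝ) h1
    have he : n - k - 1 = n - 1 - k := by omega
    rw [he]
    linear_combination (-(x ^ k * (1 - x) ^ (n - 1 - k) * g k)) * hc
  rw [hA, hB, ← Finset.sum_sub_distrib, bsum, Finset.mul_sum]
  have hr : n - 1 + 1 = n := Nat.sub_add_cancel hn
  rw [hr]
  apply Finset.sum_congr rfl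
  intro k _
  simp only [fd]
  ring

lemma hasDerivAt_bsum (n : ℕ) (hn : 1 ≤ n) (g : ℕ → ℝ) (x : ℝ) :
    HasDerivAt (bsum n g) ((n : ℝ) * bsum (n - 1) (fd g) x) x := by
  have key : ∀ k ∈ Finset.range (n + 1),
      HasDerivAt (fun x : ℝ => g k * (n.choose k : ℝ) * x ^ k * (1 - x) ^ (n - k))
        (g k * (n.choose k : ℝ) * ((k : ℝ) * x ^ (k - 1) * (1 - x) ^ (n - k))
          - g k * (n.choose k : ℝ) * (((n - k : ℕ) : ℝ) * x ^ k * (1 - x) ^ (n - k - 1))) x := by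
    intro k _
    have h1 : HasDerivAt (fun x : ℝ => x ^ k) ((k : ℝ) * x ^ (k - 1)) x := hasDerivAt_pow k x
    have h2 : HasDerivAt (fun x : ℝ => (1 - x) ^ (n - k))
        (-(((n - k : ℕ) : ℝ) * (1 - x) ^ (n - k - 1))) x := by
      have := ((hasDerivAt_pow (n - k) (1 - x)).comp x
        ((hasDerivAt_const x (1:ℝ)).sub (hasDerivAt_id x)))
      simpa [Function.comp_def] using this
    have := ((h1.const_mul (g k * (n.choose k : ℝ))).mul h2)
    exact this.congr_deriv (by ring)
  have hsum := HasDerivAt.fun_sum key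
  exact hsum.congr_deriv (bsum_deriv_identity n hn g x).symm

lemma deriv_bsum (n : ℕ) (hn : 1 ≤ n) (g : ℕ → ℝ) :
    deriv (bsum n g) = fun x => (n : ℝ) * bsum (n - 1) (fd g) x := by
  funext x; exact (hasDerivAt_bsum n hn g x).deriv

lemma iteratedDeriv_bsum (m : ℕ) : ∀ (n : ℕ), m ≤ n → ∀ (g : ℕ → ℝ) (x : ℝ),
    iteratedDeriv m (bsum n g) x
      = (n.descFactorial m : ℝ) * bsum (n - m) (fd^[m] g) x := by
  induction m with
  | zero => intro n _ g x; simp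
  | succ m IH =>
    intro n hn g x
    rw [iteratedDeriv_succ', deriv_bsum n (le_trans (Nat.succ_le_succ (Nat.zero_le m)) hn)]
    have : iteratedDeriv m (fun x => (n : ℝ) * bsum (n - 1) (fd g) x) x
        = (n : ℝ) * iteratedDeriv m (bsum (n - 1) (fd g)) x := by
      rw [← iteratedDerivWithin_univ, ← iteratedDerivWithin_univ]
      exact iteratedDerivWithin_const_mul (Set.mem_univ x) uniqueDiffOn_univ (n : ℝ)
        ((contDiff_bsum _ _ m).contDiffWithinAt)
    rw [this, IH (n - 1) (by omega) (fd g) x]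
    have h1 : n - 1 - m = n - (m + 1) := by omega
    have h2 : (n.descFactorial (m + 1) : ℝ) = (n : ℝ) * ((n-1).descFactorial m : ℝ) := by
      have : n.descFactorial (m + 1) = n * (n-1).descFactorial m := by
        have := Nat.succ_descFactorial_succ (n - 1) m
        rw [Nat.sub_add_cancel (by omega : 1 ≤ n)] at this
        exact this
      exact_mod_cast congrArg (Nat.cast : ℕ → ℝ) this
    rw [h1, h2, Function.iterate_succ_apply]
    ring

lemma fd_iterate (h : ℝ) (F : ℝ → ℝ) (m : ℕ) :
    ∀ k : ℕ, fd^[m] (fun j : ℕ => F (j * h)) k = (Dh h)^[m] F (k * h) := by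
  induction m with
  | zero => intro k; rfl
  | succ m IH =>
    intro k
    rw [Function.iterate_succ_apply', Function.iterate_succ_apply']
    simp only [fd, Dh, IH]
    push_cast
    ring_nf

lemma Dh_continuousOn (h : ℝ) (m : ℕ) :
    ∀ (F : ℝ → ℝ) (T S : Set ℝ), ContinuousOn F T →
      (∀ x ∈ S, ∀ j : ℕ, j ≤ m → x + j * h ∈ T) →
      ContinuousOn ((Dh h)^[m] F) S := by
  induction m with
  | zero =>
    intro F T S hF hS
    simpa using hF.mono (fun x hx => by simpa using hS x hx 0 (le_refl 0))
  | succ m IH =>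
    intro F T S hF hS
    rw [Function.iterate_succ_apply]
    apply IH (Dh h F) {x | x ∈ T ∧ x + h ∈ T} S
    · apply ContinuousOn.sub
      · exact hF.comp (continuous_id.add continuous_const).continuousOn (fun x hx => hx.2)
      · exact hF.mono (fun x hx => hx.1)
    · intro x hx j hj
      constructor
      · exact hS x hx j (by omega)
      · have e : x + (j:ℝ) * h + h = x + ((j+1 : ℕ) : ℝ) * h := by push_cast; ring
        show x + (j:ℝ) * h + h ∈ T
        rw [e]; exact hS x hx (j + 1) (by omega)
  
lemma Dh_hasDerivAt (h : ℝ) (m : ℕ) :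
    ∀ (F F' : ℝ → ℝ) (S : Set ℝ), (∀ x ∈ S, HasDerivAt F (F' x) x) →
      ∀ t : ℝ, (∀ j : ℕ, j ≤ m → t + j * h ∈ S) →
      HasDerivAt ((Dh h)^[m] F) ((Dh h)^[m] F' t) t := by
  induction m with
  | zero =>
    intro F F' S hF t ht
    simpa using hF t (by simpa using ht 0 (le_refl 0))
  | succ m IH =>
    intro F F' S hF t ht
    rw [Function.iterate_succ_apply, Function.iterate_succ_apply]
    apply IH (Dh h F) (Dh h F') {x | x ∈ S ∧ x + h ∈ S}
    · intro x hx
      have h1 : HasDerivAt (fun y => F (y + h)) (F' (x + h)) x := by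
        have := (hF (x + h) hx.2).comp x ((hasDerivAt_id x).add_const h)
        simpa [Function.comp_def] using this
      exact h1.sub (hF x hx.1)
    · intro j hj
      constructor
      · exact ht j (by omega)
      · have e : t + (j:ℝ) * h + h = t + ((j+1 : ℕ) : ℝ) * h := by push_cast; ring
        show t + (j:ℝ) * h + h ∈ S
        rw [e]; exact ht (j + 1) (by omega)

lemma mvt_iter (m : ℕ) : ∀ (F : ℝ → ℝ), ContDiffOn ℝ m F (Icc 0 1) →
    ∀ (a h : ℝ), 0 < h → 0 ≤ a → a + m * h ≤ 1 →
    ∃ ξ ∈ Icc a (a + m * h),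
      (Dh h)^[m] F a = h ^ m * iteratedDerivWithin m F (Icc 0 1) ξ := by
  induction m with
  | zero =>
    intro F _ a h _ _ _
    exact ⟨a, by simp, by simp⟩
  | succ m IH =>
    intro F hF a h hh ha hab
    have hm1 : a + ((m : ℝ) + 1) * h ≤ 1 := by push_cast at hab; linarith
    set F' := derivWithin F (Icc (0:ℝ) 1) with hF'def
    have hF' : ContDiffOn ℝ m F' (Icc 0 1) := by
      apply hF.derivWithin (uniqueDiffOn_Icc zero_lt_one)
      exact_mod_cast le_refl (m + 1 : ℕ)
    have hFd : ∀ x ∈ Ioo (0:ℝ) 1, HasDerivAt F (F' x) x := by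
      intro x hx
      have hdiff : DifferentiableOn ℝ F (Icc 0 1) := by
        apply hF.differentiableOn
        exact_mod_cast Nat.succ_ne_zero m
      have hx' : x ∈ Icc (0:ℝ) 1 := Ioo_subset_Icc_self hx
      have := (hdiff x hx').hasDerivWithinAt
      exact this.hasDerivAt (Icc_mem_nhds hx.1 hx.2)
    set g := (Dh h)^[m] F with hgdef
    have hgc : ContinuousOn g (Icc a (a + h)) := by
      apply Dh_continuousOn h m F (Icc 0 1) _ hF.continuousOn
      intro x hx j hj
      have hj' : (j : ℝ) ≤ m := Nat.cast_le.mpr hj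
      have hjh : 0 ≤ (j : ℝ) * h := by positivity
      constructor
      · nlinarith [hx.1]
      · nlinarith [hx.2, hj', hh.le]
    have hgd : ∀ x ∈ Ioo a (a + h), HasDerivAt g ((Dh h)^[m] F' x) x := by
      intro x hx
      apply Dh_hasDerivAt h m F F' (Ioo 0 1) hFd
      intro j hj
      have hj' : (j : ℝ) ≤ m := Nat.cast_le.mpr hj
      have hjh : 0 ≤ (j : ℝ) * h := by positivity
      constructor
      · nlinarith [hx.1]
      · nlinarith [hx.2, hj', hh]
    obtain ⟨η, hη, hslope⟩ := exists_hasDerivAt_eq_slope g ((Dh h)^[m] F')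
      (by linarith : a < a + h) hgc hgd
    have hkey : (Dh h)^[m+1] F a = h * (Dh h)^[m] F' η := by
      rw [Function.iterate_succ_apply']
      show g (a + h) - g a = h * (Dh h)^[m] F' η
      rw [hslope, add_sub_cancel_left]
      field_simp
    obtain ⟨ξ, hξmem, hξ⟩ := IH F' hF' η h hh (le_of_lt (lt_of_le_of_lt ha hη.1))
      (by nlinarith [hη.2])
    refine ⟨ξ, ?_, ?_⟩
    · constructor
      · exact le_trans hη.1.le hξmem.1
      · push_cast
        nlinarith [hξmem.2, hη.2]
    · have hξI : ξ ∈ Icc (0:ℝ) 1 := by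
        constructor
        · exact le_trans (le_trans ha hη.1.le) hξmem.1
        · have hmh : 0 ≤ (m:ℝ) * h := by positivity
          nlinarith [hξmem.2, hη.2]
      rw [hkey, hξ, ← iteratedDerivWithin_succ']
      ring

lemma div_mem_Icc (i n : ℕ) (h : i ≤ n) : (i : ℝ) / n ∈ Icc (0:ℝ) 1 := by
  rcases Nat.eq_zero_or_pos n with hn | hn
  · subst hn; simp
  · have hn' : 0 < (n : ℝ) := by exact_mod_cast hn
    constructor
    · positivity
    · rw [div_le_one hn']
      exact_mod_cast h

lemma bern_tendstoUniformly (G : ℝ → ℝ) (hG : ContinuousOn G (Icc 0 1)) :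
    TendstoUniformlyOn (fun n x => bern n G x) G atTop (Icc 0 1) := by
  classical
  set clamp : ℝ → ℝ := fun x => max 0 (min 1 x) with hclamp
  have hclampc : Continuous clamp := (continuous_const.max (continuous_const.min continuous_id))
  have hclampmem : ∀ x, clamp x ∈ Icc (0:ℝ) 1 := by
    intro x
    constructor
    · exact le_max_left _ _
    · simp [hclamp]
  have hclampeq : ∀ x ∈ Icc (0:ℝ) 1, clamp x = x := by
    intro x hx
    simp only [hclamp]
    rw [min_eq_right hx.2, max_eq_right hx.1]
  set Gc : ℝ → ℝ := fun x => G (clamp x) with hGc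
  have hGcc : Continuous Gc := hG.comp_continuous hclampc hclampmem
  have hGceq : ∀ x ∈ Icc (0:ℝ) 1, Gc x = G x := fun x hx => by
    simp only [hGc, hclampeq x hx]
  set F : C(I, ℝ) := ⟨fun x => Gc x, hGcc.comp continuous_subtype_val⟩ with hF
  have key : ∀ (n : ℕ) (x : I), bernsteinApproximation n F x = bern n Gc (x : ℝ) := by
    intro n x
    rw [bernsteinApproximation]
    simp only [ContinuousMap.coe_sum, Finset.sum_apply, ContinuousMap.coe_smul, Pi.smul_apply,
      smul_eq_mul, bernstein_apply]
    rw [bern, ← Fin.sum_univ_eq_sum_range]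
    apply Finset.sum_congr rfl
    intro k _
    have : (F (bernstein.z k) : ℝ) = Gc ((k : ℝ) / n) := rfl
    rw [this]
    simp only [ContinuousMap.mul_apply, ContinuousMap.const_apply, bernstein_apply]
    ring
  have huni := bernsteinApproximation_uniform F
  rw [Metric.tendstoUniformlyOn_iff]
  intro ε hε
  have := (Metric.tendsto_nhds.mp huni) ε hε
  filter_upwards [this] with n hn
  intro x hx
  have hxI : (⟨x, hx⟩ : I) = x := rfl
  have hd : dist (F ⟨x, hx⟩) (bernsteinApproximation n F ⟨x, hx⟩)
      ≤ dist F (bernsteinApproximation n F) := ContinuousMap.dist_apply_le_dist _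
  rw [dist_comm F] at hd
  have : dist (G x) (bern n G x) = dist (F ⟨x, hx⟩) (bernsteinApproximation n F ⟨x, hx⟩) := by
    rw [key n ⟨x, hx⟩]
    have h1 : (F ⟨x, hx⟩ : ℝ) = G x := hGceq x hx
    rw [h1]
    congr 1
    · rw [bern, bern]
      apply Finset.sum_congr rfl
      intro i hi
      rw [Finset.mem_range] at hi
      rw [hGceq _ (div_mem_Icc i n (by omega))]
  rw [this]
  exact lt_of_le_of_lt hd hn

lemma bern_eq_bsum (n : ℕ) (f : ℝ → ℝ) (x : ℝ) :
    bern n f x = bsum n (fun k => f ((k : ℝ) / n)) x := by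
  apply Finset.sum_congr rfl
  intro k _
  ring

lemma bsum_partition (N : ℕ) (x : ℝ) : bsum N (fun _ => 1) x = 1 := by
  have := add_pow x (1 - x) N
  simp only [add_sub_cancel, one_pow] at this
  rw [bsum]
  calc ∑ k ∈ Finset.range (N + 1), 1 * (N.choose k : ℝ) * x ^ k * (1 - x) ^ (N - k)
      = ∑ k ∈ Finset.range (N + 1), x ^ k * (1 - x) ^ (N - k) * (N.choose k : ℝ) := by
        apply Finset.sum_congr rfl; intro k _; ring
    _ = 1 := this.symm

lemma bsum_abs_le (N : ℕ) (g : ℕ → ℝ) (x : ℝ) (hx : x ∈ Icc (0:ℝ) 1) (c : ℝ)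
    (hg : ∀ k, k ≤ N → |g k| ≤ c) : |bsum N g x| ≤ c := by
  have hb : ∀ k, 0 ≤ (N.choose k : ℝ) * x ^ k * (1 - x) ^ (N - k) := by
    intro k
    have h1 : (0:ℝ) ≤ x := hx.1
    have h2 : (0:ℝ) ≤ 1 - x := by linarith [hx.2]
    positivity
  calc |bsum N g x| ≤ ∑ k ∈ Finset.range (N + 1),
        |g k * (N.choose k : ℝ) * x ^ k * (1 - x) ^ (N - k)| :=
        Finset.abs_sum_le_sum_abs _ _
    _ ≤ ∑ k ∈ Finset.range (N + 1),
        c * ((N.choose k : ℝ) * x ^ k * (1 - x) ^ (N - k)) := by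
        apply Finset.sum_le_sum
        intro k hk
        rw [Finset.mem_range] at hk
        have h2 : (0:ℝ) ≤ x := hx.1
        have h3 : (0:ℝ) ≤ 1 - x := by linarith [hx.2]
        have h1 : |g k * (N.choose k : ℝ) * x ^ k * (1 - x) ^ (N - k)|
            = |g k| * ((N.choose k : ℝ) * x ^ k * (1 - x) ^ (N - k)) := by
          rw [abs_mul, abs_mul, abs_mul]
          rw [abs_of_nonneg (by positivity : (0:ℝ) ≤ (N.choose k : ℝ)),
            abs_of_nonneg (by positivity : (0:ℝ) ≤ x ^ k),
            abs_of_nonneg (by positivity : (0:ℝ) ≤ (1 - x) ^ (N - k))]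
          ring
        rw [h1]
        exact mul_le_mul_of_nonneg_right (hg k (by omega)) (hb k)
    _ = c * bsum N (fun _ => 1) x := by
        rw [bsum, Finset.mul_sum]
        apply Finset.sum_congr rfl
        intro k _
        ring
    _ = c := by rw [bsum_partition]; ring

lemma bsum_const_mul (N : ℕ) (c : ℝ) (g : ℕ → ℝ) (x : ℝ) :
    bsum N (fun k => c * g k) x = c * bsum N g x := by
  rw [bsum, bsum, Finset.mul_sum]
  apply Finset.sum_congr rfl
  intro k _
  ring

lemma bsum_sub (N : ℕ) (g g' : ℕ → ℝ) (x : ℝ) :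
    bsum N g x - bsum N g' x = bsum N (fun k => g k - g' k) x := by
  rw [bsum, bsum, bsum, ← Finset.sum_sub_distrib]
  apply Finset.sum_congr rfl
  intro k _
  ring

lemma descFactorial_tendsto (m : ℕ) :
    Tendsto (fun n : ℕ => (n.descFactorial m : ℝ) * (1 / (n:ℝ)) ^ m) atTop (𝓝 1) := by
  have heq : ∀ᶠ n : ℕ in atTop, (n.descFactorial m : ℝ) * (1 / (n:ℝ)) ^ m
      = ∏ i ∈ Finset.range m, (1 - (i : ℝ) / n) := by
    filter_upwards [eventually_ge_atTop m, eventually_ge_atTop 1] with n hn hn1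
    have hn0 : (n : ℝ) ≠ 0 := by
      have : 0 < n := by omega
      exact_mod_cast this.ne'
    have h1 : (n.descFactorial m : ℝ) = ∏ i ∈ Finset.range m, ((n - i : ℕ) : ℝ) := by
      rw [Nat.descFactorial_eq_prod_range]
      push_cast
      rfl
    rw [h1, one_div,
      show ((n:ℝ)⁻¹) ^ m = ∏ _i ∈ Finset.range m, ((n:ℝ)⁻¹) by
        simp [Finset.prod_const, Finset.card_range],
      ← Finset.prod_mul_distrib]
    apply Finset.prod_congr rfl
    intro i hi
    rw [Finset.mem_range] at hi
    rw [Nat.cast_sub (by omega : i ≤ n)]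
    field_simp
  have hlim : Tendsto (fun n : ℕ => ∏ i ∈ Finset.range m, (1 - (i : ℝ) / n)) atTop
      (𝓝 (∏ _i ∈ Finset.range m, (1:ℝ))) := by
    apply tendsto_finset_prod
    intro i _
    have := tendsto_const_div_atTop_nhds_zero_nat (i : ℝ)
    have h2 := tendsto_const_nhds (x := (1:ℝ)) (f := atTop (α := ℕ)) |>.sub this
    simpa using h2
  rw [Finset.prod_const_one] at hlim
  exact Tendsto.congr' (heq.mono fun n h => h.symm) hlim

lemma iteratedDerivWithin_eq_iteratedDeriv_of_smooth (F : ℝ → ℝ)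
    (hF : ∀ N : ℕ, ContDiff ℝ N F) (k : ℕ) :
    ∀ x ∈ Icc (0:ℝ) 1, iteratedDerivWithin k F (Icc 0 1) x = iteratedDeriv k F x := by
  induction k with
  | zero => intro x _; simp
  | succ k IH =>
    intro x hx
    have hu : UniqueDiffWithinAt ℝ (Icc (0:ℝ) 1) x :=
      (uniqueDiffOn_Icc zero_lt_one).uniqueDiffWithinAt hx
    rw [iteratedDerivWithin_succ, iteratedDeriv_succ]
    rw [derivWithin_congr (fun y hy => IH y hy) (IH x hx)]
    have hdiff : DifferentiableAt ℝ (iteratedDeriv k F) x := by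
      have := (hF (k + 1)).differentiable_iteratedDeriv k (by exact_mod_cast Nat.lt_succ_self k)
      exact this.differentiableAt
    exact (hdiff.hasDerivAt.hasDerivWithinAt).derivWithin hu

lemma derivs_tendsto (m : ℕ) (hm : 1 ≤ m) (f : ℝ → ℝ)
    (hf : ContDiffOn ℝ m f (Icc 0 1)) :
    TendstoUniformlyOn (fun n x => iteratedDeriv m (bern n f) x)
      (iteratedDerivWithin m f (Icc 0 1)) atTop (Icc 0 1) := by
  classical
  set G := iteratedDerivWithin m f (Icc (0:ℝ) 1) with hGdef
  have hGcont : ContinuousOn G (Icc 0 1) :=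
    hf.continuousOn_iteratedDerivWithin (le_refl _) (uniqueDiffOn_Icc zero_lt_one)
  -- bound on G
  obtain ⟨M0, hM0⟩ := isCompact_Icc.exists_bound_of_continuousOn hGcont
  set M := max M0 0 with hMdef
  have hM : ∀ x ∈ Icc (0:ℝ) 1, |G x| ≤ M := fun x hx =>
    le_trans (hM0 x hx) (le_max_left _ _)
  have hMnn : 0 ≤ M := le_max_right _ _
  -- uniform continuity
  have hUC : UniformContinuousOn G (Icc 0 1) :=
    isCompact_Icc.uniformContinuousOn_of_continuous hGcont
  rw [Metric.tendstoUniformlyOn_iff]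
  intro ε hε
  obtain ⟨δ, hδ, hδG⟩ := (Metric.uniformContinuousOn_iff.mp hUC) (ε/4) (by linarith)
  -- events
  have hev1 : ∀ᶠ n : ℕ in atTop, m + 1 ≤ n := eventually_ge_atTop (m + 1)
  have hev2 : ∀ᶠ n : ℕ in atTop,
      |(n.descFactorial m : ℝ) * (1 / (n:ℝ)) ^ m - 1| < min (ε / (4 * (M + 1))) 1 := by
    have := (descFactorial_tendsto m)
    rw [Metric.tendsto_nhds] at this
    have hpos : 0 < min (ε / (4 * (M + 1))) 1 := by
      apply lt_min
      · positivity
      · norm_num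
    filter_upwards [this _ hpos] with n hn
    rwa [Real.dist_eq] at hn
  have hev3 : ∀ᶠ n : ℕ in atTop, (m : ℝ) / n < δ := by
    have := tendsto_const_div_atTop_nhds_zero_nat (m : ℝ)
    rw [Metric.tendsto_nhds] at this
    filter_upwards [this δ hδ] with n hn
    rw [Real.dist_eq, sub_zero] at hn
    calc (m : ℝ) / n ≤ |(m:ℝ)/n| := le_abs_self _
      _ < δ := hn
  have hev4 : ∀ᶠ n : ℕ in atTop,
      ∀ x ∈ Icc (0:ℝ) 1, dist (G x) (bern (n - m) G x) < ε / 4 := by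
    have hb := bern_tendstoUniformly G hGcont
    rw [Metric.tendstoUniformlyOn_iff] at hb
    have hbe := hb (ε/4) (by linarith)
    exact (tendsto_sub_atTop_nat m).eventually hbe
  filter_upwards [hev1, hev2, hev3, hev4] with n hn1 hn2 hn3 hn4
  intro x hx
  set N := n - m with hNdef
  have hNn : N + m = n := by omega
  have hN1 : 1 ≤ N := by omega
  have hnpos : (0:ℝ) < n := by exact_mod_cast (by omega : 0 < n)
  have hNpos : (0:ℝ) < N := by exact_mod_cast (by omega : 0 < N)
  -- the MVT points
  have hchoice : ∀ k : ℕ, ∃ ξ : ℝ, k ≤ N →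
      (ξ ∈ Icc ((k:ℝ)/n) ((k:ℝ)/n + m * (1/n)) ∧
        (Dh (1/(n:ℝ)))^[m] f ((k:ℝ)/n) = (1/(n:ℝ))^m * G ξ) := by
    intro k
    by_cases hk : k ≤ N
    · have hmem : (0:ℝ) ≤ (k:ℝ)/n := by positivity
      have hub : (k:ℝ)/n + m * (1/n) ≤ 1 := by
        rw [mul_one_div, ← add_div, div_le_one hnpos]
        exact_mod_cast (by omega : k + m ≤ n)
      obtain ⟨ξ, hξmem, hξeq⟩ := mvt_iter m f hf ((k:ℝ)/n) (1/n)
        (by positivity) hmem hub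
      exact ⟨ξ, fun _ => ⟨hξmem, hξeq⟩⟩
    · exact ⟨0, fun h => absurd h hk⟩
  choose ξ hξ using hchoice
  -- rewrite the iterated derivative
  set dn := (n.descFactorial m : ℝ) * (1 / (n:ℝ)) ^ m with hdndef
  have hrw : iteratedDeriv m (bern n f) x = dn * bsum N (fun k => G (ξ k)) x := by
    have h0 : bern n f = bsum n (fun k => f ((k : ℝ) / n)) := by
      funext y; exact bern_eq_bsum n f y
    rw [h0, iteratedDeriv_bsum m n (by omega) _ x]
    have h1 : (fun k : ℕ => f ((k : ℝ) / n)) = (fun j : ℕ => f ((j : ℝ) * (1/(n:ℝ)))) := by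
      funext j
      rw [mul_one_div]
    have h2 : ∀ k, k ≤ N → fd^[m] (fun k : ℕ => f ((k : ℝ) / n)) k = (1/(n:ℝ))^m * G (ξ k) := by
      intro k hk
      rw [h1, fd_iterate (1/(n:ℝ)) f m k, mul_one_div]
      exact (hξ k hk).2
    have h3 : bsum (n - m) (fd^[m] fun k : ℕ => f ((k : ℝ) / n)) x
        = bsum N (fun k => (1/(n:ℝ))^m * G (ξ k)) x := by
      apply Finset.sum_congr rfl
      intro k hk
      rw [Finset.mem_range] at hk
      rw [h2 k (by omega)]
    rw [h3, bsum_const_mul]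
    ring
  -- estimate
  have hxik : ∀ k, k ≤ N → ξ k ∈ Icc (0:ℝ) 1 := by
    intro k hk
    obtain ⟨hmem, _⟩ := hξ k hk
    constructor
    · exact le_trans (by positivity) hmem.1
    · apply le_trans hmem.2
      rw [mul_one_div, ← add_div, div_le_one hnpos]
      exact_mod_cast (by omega : k + m ≤ n)
  have hclose : ∀ k, k ≤ N → |ξ k - (k:ℝ)/N| ≤ (m:ℝ)/n := by
    intro k hk
    obtain ⟨hmem, _⟩ := hξ k hk
    have hle1 : (k:ℝ)/n ≤ (k:ℝ)/N := by
      apply div_le_div_of_nonneg_left (by positivity) hNpos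
      exact_mod_cast (by omega : N ≤ n)
    have hle2 : (k:ℝ)/N ≤ (k:ℝ)/n + (m:ℝ)/n := by
      rw [← add_div, div_le_div_iff₀ hNpos hnpos]
      have hkN : (k:ℝ) ≤ N := by exact_mod_cast hk
      have hnr : (n:ℝ) = N + m := by exact_mod_cast hNn.symm
      nlinarith [hkN, (by positivity : (0:ℝ) ≤ (m:ℝ))]
    have h1 := hmem.1
    have h2 := hmem.2
    rw [mul_one_div] at h2
    rw [abs_le]
    constructor <;> linarith
  have hbernN : bsum N (fun k => G ((k:ℝ)/N)) x = bern N G x := (bern_eq_bsum N G x).symm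
  have hmain : |dn * bsum N (fun k => G (ξ k)) x - bern N G x|
      ≤ |dn - 1| * M + ε / 4 := by
    rw [← hbernN, ← bsum_const_mul, bsum_sub]
    apply bsum_abs_le N _ x hx
    intro k hk
    have hδk : dist (ξ k) ((k:ℝ)/N) < δ :=
      lt_of_le_of_lt (by rw [Real.dist_eq]; exact hclose k hk) hn3
    have hGd : |G (ξ k) - G ((k:ℝ)/N)| < ε / 4 := by
      have := hδG (ξ k) (hxik k hk) ((k:ℝ)/N) (div_mem_Icc k N hk) hδk
      rwa [Real.dist_eq] at this
    have : dn * G (ξ k) - G ((k:ℝ)/N)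
        = (dn - 1) * G (ξ k) + (G (ξ k) - G ((k:ℝ)/N)) := by ring
    rw [this]
    calc |(dn - 1) * G (ξ k) + (G (ξ k) - G ((k:ℝ)/N))|
        ≤ |(dn - 1) * G (ξ k)| + |G (ξ k) - G ((k:ℝ)/N)| := abs_add_le _ _
      _ ≤ |dn - 1| * M + ε / 4 := by
          rw [abs_mul]
          have := hM (ξ k) (hxik k hk)
          gcongr
  have hfinal : dist (G x) (iteratedDeriv m (bern n f) x) < ε := by
    rw [hrw, Real.dist_eq]
    have hbN := hn4 x hx
    rw [Real.dist_eq] at hbN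
    have h5 : |G x - dn * bsum N (fun k => G (ξ k)) x|
        ≤ |dn * bsum N (fun k => G (ξ k)) x - bern N G x| + |G x - bern N G x| := by
      rw [abs_sub_comm]
      calc |dn * bsum N (fun k => G (ξ k)) x - G x|
          = |(dn * bsum N (fun k => G (ξ k)) x - bern N G x) + (bern N G x - G x)| := by
            ring_nf
        _ ≤ |dn * bsum N (fun k => G (ξ k)) x - bern N G x| + |bern N G x - G x| := abs_add_le _ _
        _ = |dn * bsum N (fun k => G (ξ k)) x - bern N G x| + |G x - bern N G x| := by
            rw [abs_sub_comm (bern N G x)]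
    have hd1 : |dn - 1| * M ≤ ε / 4 := by
      have h6 : |dn - 1| ≤ ε / (4 * (M + 1)) := le_trans hn2.le (min_le_left _ _)
      calc |dn - 1| * M ≤ (ε / (4 * (M + 1))) * M := by gcongr
        _ ≤ ε / 4 := by
            rw [div_mul_eq_mul_div, div_le_div_iff₀ (by positivity) (by norm_num)]
            nlinarith
    linarith [h5, hmain, hd1, hbN]
  exact hfinal

lemma kernel_integrable (x β : ℝ) (hβ : -1 < β) (hx : x ∈ Icc (0:ℝ) 1)
    (w : ℝ → ℝ) (hw : ContinuousOn w (Icc 0 1)) :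
    IntervalIntegrable (fun τ => (τ - x) ^ β * w τ) volume x 1 := by
  obtain ⟨M0, hM0⟩ := isCompact_Icc.exists_bound_of_continuousOn hw
  set M := max M0 0 with hM
  have hMb : ∀ τ ∈ Icc (0:ℝ) 1, |w τ| ≤ M := fun τ hτ =>
    le_trans (hM0 τ hτ) (le_max_left _ _)
  have hx1 : x ≤ 1 := hx.2
  have hIoc : Set.uIoc x 1 = Ioc x 1 := uIoc_of_le hx1
  have hrp : IntervalIntegrable (fun τ : ℝ => (τ - x) ^ β) volume x 1 := by
    have h0 := (intervalIntegrable_rpow' hβ (a := (0:ℝ)) (b := 1 - x)).comp_sub_right x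
    have : (0:ℝ) + x = x := by ring
    rw [this] at h0
    have h2 : (1:ℝ) - x + x = 1 := by ring
    rwa [h2] at h0
  apply IntervalIntegrable.mono_fun' (hrp.const_mul M)
  · apply ContinuousOn.aestronglyMeasurable _ (hIoc ▸ measurableSet_Ioc)
    rw [hIoc]
    apply ContinuousOn.mul
    · apply ContinuousOn.rpow_const
      · exact (continuous_id.sub continuous_const).continuousOn
      · intro τ hτ
        exact Or.inl (ne_of_gt (sub_pos.mpr hτ.1))
    · apply hw.mono
      intro τ hτ
      exact ⟨le_trans hx.1 hτ.1.le, hτ.2⟩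
  · rw [hIoc]
    apply ae_restrict_of_forall_mem measurableSet_Ioc
    intro τ hτ
    have hτx : 0 < τ - x := sub_pos.mpr hτ.1
    have hker : 0 ≤ (τ - x) ^ β := Real.rpow_nonneg hτx.le β
    simp only [norm_mul, Real.norm_eq_abs]
    rw [abs_of_nonneg hker]
    have : |w τ| ≤ M := hMb τ ⟨le_trans hx.1 hτ.1.le, hτ.2⟩
    calc (τ - x) ^ β * |w τ| ≤ (τ - x) ^ β * M := by gcongr
      _ = M * (τ - x) ^ β := by ring

lemma kernel_integral_value (x β : ℝ) (hβ : -1 < β) (hx : x ∈ Icc (0:ℝ) 1) :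
    ∫ τ in x..1, (τ - x) ^ β = (1 - x) ^ (β + 1) / (β + 1) := by
  have h1 : (∫ τ in x..1, (τ - x) ^ β) = ∫ u in x - x..1 - x, u ^ β :=
    integral_comp_sub_right (fun u => u ^ β) x
  rw [h1, sub_self]
  rw [integral_rpow (Or.inl hβ)]
  rw [Real.zero_rpow (by linarith : β + 1 ≠ 0)]
  ring

lemma rpow_shift_integrable (x β : ℝ) (hβ : -1 < β) :
    IntervalIntegrable (fun τ : ℝ => (τ - x) ^ β) volume x 1 := by
  have h0 := (intervalIntegrable_rpow' hβ (a := (0:ℝ)) (b := 1 - x)).comp_sub_right x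
  have h1 : (0:ℝ) + x = x := by ring
  have h2 : (1:ℝ) - x + x = 1 := by ring
  rwa [h1, h2] at h0

lemma caputo_diff_bound (x β c ε : ℝ) (hβ : -1 < β) (hx : x ∈ Icc (0:ℝ) 1)
    (hε : 0 ≤ ε) (u v : ℝ → ℝ) (hu : ContinuousOn u (Icc 0 1))
    (hv : ContinuousOn v (Icc 0 1)) (hd : ∀ τ ∈ Icc (0:ℝ) 1, |u τ - v τ| ≤ ε) :
    |c * (∫ τ in x..1, (τ - x) ^ β * u τ) - c * ∫ τ in x..1, (τ - x) ^ β * v τ|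
      ≤ |c| * ε / (β + 1) := by
  have hβ1 : 0 < β + 1 := by linarith
  have hui := kernel_integrable x β hβ hx u hu
  have hvi := kernel_integrable x β hβ hx v hv
  have hIoc : Set.uIoc x 1 = Ioc x 1 := uIoc_of_le hx.2
  have hsub : (∫ τ in x..1, (τ - x) ^ β * u τ) - ∫ τ in x..1, (τ - x) ^ β * v τ
      = ∫ τ in x..1, ((τ - x) ^ β * u τ - (τ - x) ^ β * v τ) :=
    (integral_sub hui hvi).symm
  have hnorm : ‖∫ τ in x..1, ((τ - x) ^ β * u τ - (τ - x) ^ β * v τ)‖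
      ≤ |∫ τ in x..1, ε * (τ - x) ^ β| := by
    apply intervalIntegral.norm_integral_le_abs_of_norm_le
    · rw [hIoc]
      apply ae_restrict_of_forall_mem measurableSet_Ioc
      intro τ hτ
      have hτx : 0 < τ - x := sub_pos.mpr hτ.1
      have hker : 0 ≤ (τ - x) ^ β := Real.rpow_nonneg hτx.le β
      have hτI : τ ∈ Icc (0:ℝ) 1 := ⟨le_trans hx.1 hτ.1.le, hτ.2⟩
      calc ‖(τ - x) ^ β * u τ - (τ - x) ^ β * v τ‖
          = (τ - x) ^ β * |u τ - v τ| := by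
            rw [← mul_sub, Real.norm_eq_abs, abs_mul, abs_of_nonneg hker]
        _ ≤ (τ - x) ^ β * ε := by gcongr; exact hd τ hτI
        _ = ε * (τ - x) ^ β := by ring
    · exact (rpow_shift_integrable x β hβ).const_mul ε
  have hval : (∫ τ in x..1, ε * (τ - x) ^ β) = ε * ((1 - x) ^ (β + 1) / (β + 1)) := by
    rw [intervalIntegral.integral_const_mul, kernel_integral_value x β hβ hx]
  have hle1 : (1 - x) ^ (β + 1) ≤ 1 :=
    Real.rpow_le_one (by linarith [hx.2]) (by linarith [hx.1]) hβ1.le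
  have hge0 : 0 ≤ (1 - x) ^ (β + 1) := Real.rpow_nonneg (by linarith [hx.2]) _
  calc |c * (∫ τ in x..1, (τ - x) ^ β * u τ) - c * ∫ τ in x..1, (τ - x) ^ β * v τ|
      = |c| * ‖(∫ τ in x..1, (τ - x) ^ β * u τ) - ∫ τ in x..1, (τ - x) ^ β * v τ‖ := by
        rw [← mul_sub, abs_mul, Real.norm_eq_abs]
    _ ≤ |c| * |∫ τ in x..1, ε * (τ - x) ^ β| := by
        rw [hsub]
        gcongr
    _ = |c| * (ε * ((1 - x) ^ (β + 1) / (β + 1))) := by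
        rw [hval, abs_of_nonneg (show (0:ℝ) ≤ ε * ((1 - x) ^ (β + 1) / (β + 1)) by positivity)]
    _ ≤ |c| * (ε * (1 / (β + 1))) := by gcongr
    _ = |c| * ε / (β + 1) := by field_simp

/-- For `f ∈ Cᵐ[0,1]` and `m - 1 ≤ α < m`, the right Caputo fractional derivatives
of the Bernstein polynomials of `f` converge uniformly on `[0,1]` to the right
Caputo fractional derivative of `f`. -/
theorem caputoRight_bernstein_uniform_convergence (m : ℕ) (hm : 1 ≤ m) (α : ℝ)
    (hα₁ : (m : ℝ) - 1 ≤ α) (hα₂ : α < m)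
    (f : ℝ → ℝ) (hf : ContDiffOn ℝ m f (Set.Icc 0 1)) :
    TendstoUniformlyOn (fun n x => caputoRight m α (bern n f) x)
      (fun x => caputoRight m α f x) Filter.atTop (Set.Icc 0 1) := by
  classical
  set β : ℝ := (m : ℝ) - α - 1 with hβdef
  have hβ : -1 < β := by simp only [hβdef]; linarith
  have hβ1 : 0 < β + 1 := by linarith
  set c : ℝ := ((-1 : ℝ) ^ m / Real.Gamma ((m : ℝ) - α)) with hcdef
  set K : ℝ := |c| with hKdef
  have hKnn : 0 ≤ K := abs_nonneg _
  set v : ℝ → ℝ := iteratedDerivWithin m f (Icc 0 1) with hvdef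
  have hvcont : ContinuousOn v (Icc 0 1) :=
    hf.continuousOn_iteratedDerivWithin (le_refl _) (uniqueDiffOn_Icc zero_lt_one)
  have hsmooth : ∀ (n N : ℕ), ContDiff ℝ N (bern n f) := by
    intro n N
    have hb : bern n f = bsum n (fun k => f ((k : ℝ) / n)) := funext (bern_eq_bsum n f)
    rw [hb]
    exact contDiff_bsum n _ N
  have hucont : ∀ n : ℕ, ContinuousOn (iteratedDerivWithin m (bern n f) (Icc 0 1)) (Icc 0 1) := by
    intro n
    exact ((hsmooth n m).contDiffOn).continuousOn_iteratedDerivWithin (le_refl _)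
      (uniqueDiffOn_Icc zero_lt_one)
  rw [Metric.tendstoUniformlyOn_iff]
  intro ε hε
  set ε' : ℝ := ε * (β + 1) / (2 * (K + 1)) with hε'def
  have hε' : 0 < ε' := by positivity
  have hkey := derivs_tendsto m hm f hf
  rw [Metric.tendstoUniformlyOn_iff] at hkey
  filter_upwards [hkey ε' hε'] with n hn
  intro x hx
  have hdbound : ∀ τ ∈ Icc (0:ℝ) 1,
      |v τ - iteratedDerivWithin m (bern n f) (Icc 0 1) τ| ≤ ε' := by
    intro τ hτ
    have h1 := hn τ hτ
    rw [Real.dist_eq] at h1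
    have h2 : iteratedDerivWithin m (bern n f) (Icc 0 1) τ = iteratedDeriv m (bern n f) τ :=
      iteratedDerivWithin_eq_iteratedDeriv_of_smooth (bern n f) (hsmooth n) m τ hτ
    rw [h2]
    exact h1.le
  have hb := caputo_diff_bound x β c ε' hβ hx hε'.le
    v (iteratedDerivWithin m (bern n f) (Icc 0 1)) hvcont (hucont n) hdbound
  have heq : dist (caputoRight m α f x) (caputoRight m α (bern n f) x)
      = |c * (∫ τ in x..1, (τ - x) ^ β * v τ)
          - c * ∫ τ in x..1, (τ - x) ^ β * iteratedDerivWithin m (bern n f) (Icc 0 1) τ| := by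
    rw [Real.dist_eq]
    rfl
  rw [heq]
  calc |c * (∫ τ in x..1, (τ - x) ^ β * v τ)
          - c * ∫ τ in x..1, (τ - x) ^ β * iteratedDerivWithin m (bern n f) (Icc 0 1) τ|
      ≤ K * ε' / (β + 1) := hb
    _ = K * ε / (2 * (K + 1)) := by
        rw [hε'def]
        field_simp
    _ < ε := by
        rw [div_lt_iff₀ (by positivity)]
        nlinarith
end

section
/- Let \alpha > 0 and f \in C[0,1]. Then the right Riemann--Liouville fractional integrals of the Bernstein polynomials of f converge uniformly on [0,1] to the right fractional integral of f: \sup_{x\in[0,1]} |{}_xI_1^\alpha B_n(f;x) - {}_xI_1^\alpha f(x)| \to 0 as n \to \infty. -/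
/-- The right Riemann--Liouville fractional integral of order `α > 0` based at `1`. -/
noncomputable def rlIntRight (α : ℝ) (f : ℝ → ℝ) (x : ℝ) : ℝ :=
  (1 / Real.Gamma α) * ∫ τ in x..(1 : ℝ), (τ - x) ^ (α - 1) * f τ

open MeasureTheory intervalIntegral Set Filter unitInterval Topology

lemma rl_aux_pow_integrable {x : ℝ} (α : ℝ) (hα : 0 < α) :
    IntervalIntegrable (fun τ => (τ - x) ^ (α - 1)) volume x 1 := by
  have h := (intervalIntegral.intervalIntegrable_rpow' (a := 0) (b := 1 - x)
    (by linarith : (-1:ℝ) < α - 1)).comp_sub_right x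
  simpa using h

lemma rl_aux_pow_integral {x : ℝ} (α : ℝ) (hα : 0 < α) :
    (∫ τ in x..(1:ℝ), (τ - x) ^ (α - 1)) = (1 - x) ^ α / α := by
  rw [intervalIntegral.integral_comp_sub_right (fun t => t ^ (α - 1)) x]
  rw [integral_rpow (Or.inl (by linarith))]
  simp [sub_self, Real.zero_rpow (by positivity : α ≠ 0), sub_add_cancel]

lemma rl_diff_bound {α : ℝ} (hα : 0 < α) {g h : ℝ → ℝ}
    (hg : ContinuousOn g (Icc 0 1)) (hh : ContinuousOn h (Icc 0 1))
    {M : ℝ} (hM : ∀ τ ∈ Icc (0:ℝ) 1, |g τ - h τ| ≤ M)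
    {x : ℝ} (hx : x ∈ Icc (0:ℝ) 1) :
    |rlIntRight α g x - rlIntRight α h x| ≤ M / (α * Real.Gamma α) := by
  obtain ⟨hx0, hx1⟩ := hx
  have hM0 : 0 ≤ M := le_trans (abs_nonneg _) (hM 0 (by norm_num))
  have hΓ : 0 < Real.Gamma α := Real.Gamma_pos_of_pos hα
  have hsub : Icc x 1 ⊆ Icc (0:ℝ) 1 := Icc_subset_Icc hx0 le_rfl
  have huIcc : uIcc x (1:ℝ) = Icc x 1 := uIcc_of_le hx1
  have hpow := rl_aux_pow_integrable (x := x) α hα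
  have hgint : IntervalIntegrable (fun τ => (τ - x) ^ (α - 1) * g τ) volume x 1 :=
    hpow.mul_continuousOn (by rw [huIcc]; exact hg.mono hsub)
  have hhint : IntervalIntegrable (fun τ => (τ - x) ^ (α - 1) * h τ) volume x 1 :=
    hpow.mul_continuousOn (by rw [huIcc]; exact hh.mono hsub)
  have hdiff : rlIntRight α g x - rlIntRight α h x
      = (1 / Real.Gamma α) * ∫ τ in x..(1:ℝ), (τ - x) ^ (α - 1) * (g τ - h τ) := by
    rw [rlIntRight, rlIntRight, ← mul_sub, ← intervalIntegral.integral_sub hgint hhint]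
    congr 1
    apply intervalIntegral.integral_congr
    intro τ _
    ring
  have hdint : IntervalIntegrable (fun τ => (τ - x) ^ (α - 1) * (g τ - h τ)) volume x 1 := by
    have := hgint.sub hhint
    simpa [mul_sub] using this
  rw [hdiff, abs_mul, abs_of_pos (by positivity : (0:ℝ) < 1 / Real.Gamma α)]
  have hbound : |∫ τ in x..(1:ℝ), (τ - x) ^ (α - 1) * (g τ - h τ)| ≤ M / α := by
    calc |∫ τ in x..(1:ℝ), (τ - x) ^ (α - 1) * (g τ - h τ)|
        ≤ ∫ τ in x..(1:ℝ), |(τ - x) ^ (α - 1) * (g τ - h τ)| :=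
          intervalIntegral.abs_integral_le_integral_abs hx1
      _ ≤ ∫ τ in x..(1:ℝ), (τ - x) ^ (α - 1) * M := by
          apply intervalIntegral.integral_mono_on hx1 hdint.abs (hpow.mul_const M)
          intro τ hτ
          rw [abs_mul, abs_of_nonneg (Real.rpow_nonneg (by linarith [hτ.1]) _)]
          exact mul_le_mul_of_nonneg_left (hM τ (hsub hτ))
            (Real.rpow_nonneg (by linarith [hτ.1]) _)
      _ = ((1 - x) ^ α / α) * M := by
          rw [intervalIntegral.integral_mul_const, rl_aux_pow_integral α hα]
      _ ≤ (1 / α) * M := by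
          have h1 : (1 - x) ^ α ≤ 1 := Real.rpow_le_one (by linarith) (by linarith) hα.le
          have h2 : (1 - x) ^ α / α ≤ 1 / α := by gcongr
          exact mul_le_mul_of_nonneg_right h2 hM0
      _ = M / α := by ring
  calc (1 / Real.Gamma α) * |∫ τ in x..(1:ℝ), (τ - x) ^ (α - 1) * (g τ - h τ)|
      ≤ (1 / Real.Gamma α) * (M / α) := by
        exact mul_le_mul_of_nonneg_left hbound (by positivity)
    _ = M / (α * Real.Gamma α) := by rw [div_mul_div_comm, one_mul, mul_comm α]

lemma bern_eq_bernsteinApproximation (n : ℕ) (f : ℝ → ℝ) (g : C(I, ℝ))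
    (hg : ∀ x : I, g x = f x) (x : I) :
    bern n f x = bernsteinApproximation n g x := by
  rw [bernsteinApproximation.apply, bern, Finset.sum_range]
  refine Finset.sum_congr rfl fun k _ => ?_
  rw [bernstein_apply, hg]
  simp [bernstein.z]
  ring

/-- For `f ∈ C[0,1]` and `α > 0`, the right Riemann--Liouville fractional integrals
of the Bernstein polynomials of `f` converge uniformly on `[0,1]` to `ₓI_1^α f`. -/
theorem rlIntRight_bernstein_uniform_convergence (α : ℝ) (hα : 0 < α)
    (f : ℝ → ℝ) (hf : ContinuousOn f (Set.Icc 0 1)) :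
    TendstoUniformlyOn (fun n x => rlIntRight α (bern n f) x)
      (fun x => rlIntRight α f x) Filter.atTop (Set.Icc 0 1) := by
  have hΓ : 0 < Real.Gamma α := Real.Gamma_pos_of_pos hα
  set g : C(I, ℝ) := ⟨fun x => f x, by exact hf.restrict⟩ with hgdef
  have hg : ∀ x : I, g x = f x := fun x => rfl
  have hconv : Tendsto (fun n : ℕ => ‖bernsteinApproximation n g - g‖) atTop (𝓝 0) := by
    have := bernsteinApproximation_uniform g
    rwa [tendsto_iff_norm_sub_tendsto_zero] at this
  rw [Metric.tendstoUniformlyOn_iff]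
  intro ε hε
  have hε' : 0 < ε * (α * Real.Gamma α) / 2 := by positivity
  filter_upwards [(Metric.tendsto_nhds.mp hconv _ hε')] with n hn
  intro x hx
  have hMlt : ‖bernsteinApproximation n g - g‖ < ε * (α * Real.Gamma α) / 2 := by
    simpa [Real.dist_eq, sub_zero, abs_norm] using hn
  set M := ‖bernsteinApproximation n g - g‖ with hMdef
  have hMb : ∀ τ ∈ Icc (0:ℝ) 1, |bern n f τ - f τ| ≤ M := by
    intro τ hτ
    have h1 : bern n f τ = bernsteinApproximation n g ⟨τ, hτ⟩ :=
      bern_eq_bernsteinApproximation n f g hg ⟨τ, hτ⟩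
    have h2 : f τ = g ⟨τ, hτ⟩ := (hg ⟨τ, hτ⟩).symm
    rw [h1, h2]
    calc |bernsteinApproximation n g ⟨τ, hτ⟩ - g ⟨τ, hτ⟩|
        = ‖(bernsteinApproximation n g - g) ⟨τ, hτ⟩‖ := by simp [Real.norm_eq_abs]
      _ ≤ M := (bernsteinApproximation n g - g).norm_coe_le_norm _
  have hbern_cont : ContinuousOn (bern n f) (Icc 0 1) := by
    apply Continuous.continuousOn
    unfold bern
    fun_prop
  have := rl_diff_bound hα hbern_cont hf hMb hx
  rw [Real.dist_eq, abs_sub_comm]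
  calc |rlIntRight α (bern n f) x - rlIntRight α f x| ≤ M / (α * Real.Gamma α) := this
    _ < ε := by
        rw [div_lt_iff₀ (by positivity)]
        have hp : 0 < ε * (α * Real.Gamma α) := by positivity
        linarith
end

section
/- Let \alpha, T, \epsilon_1, \epsilon_2 > 0 and let \delta : [0,T] \to \mathbb{R} be continuous with |\delta(t)| \leq \epsilon_1 + \frac{\epsilon_2}{\Gamma(\alpha)} \int_0^t (t-x)^{\alpha-1} |\delta(x)|\, dx for all t \in [0,T]. Then |\delta(t)| \leq \epsilon_1 E_{\alpha,1}(\epsilon_2 t^\alpha) for all t \in [0,T], where E_{\alpha,1}(z) = \sum_{k=0}^\infty \frac{z^k}{\Gamma(\alpha k + 1)} is the Mittag-Leffler function. -/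
open intervalIntegral MeasureTheory Finset Filter


lemma real_beta (a b t : ℝ) (ha : 0 < a) (hb : 0 < b) (ht : 0 < t) :
    ∫ x in (0:ℝ)..t, x ^ (a - 1) * (t - x) ^ (b - 1) =
      Real.Gamma a * Real.Gamma b / Real.Gamma (a + b) * t ^ (a + b - 1) := by
  have key := Complex.betaIntegral_scaled (a : ℂ) (b : ℂ) ht
  have hG := Complex.Gamma_mul_Gamma_eq_betaIntegral (s := (a:ℂ)) (t := (b:ℂ))
    (by simpa using ha) (by simpa using hb)
  have hGne : Complex.Gamma ((a:ℂ) + b) ≠ 0 := by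
    rw [← Complex.ofReal_add, Complex.Gamma_ofReal]
    exact_mod_cast (Real.Gamma_pos_of_pos (by positivity)).ne'
  have hbeta : Complex.betaIntegral a b =
      Complex.Gamma a * Complex.Gamma b / Complex.Gamma ((a:ℂ) + b) := by
    rw [eq_div_iff hGne, hG]; ring
  have hcongr : (∫ x in (0:ℝ)..t, (x : ℂ) ^ ((a:ℂ) - 1) * ((t : ℂ) - x) ^ ((b:ℂ) - 1)) =
      ((∫ x in (0:ℝ)..t, x ^ (a - 1) * (t - x) ^ (b - 1) : ℝ) : ℂ) := by
    rw [← intervalIntegral.integral_ofReal]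
    refine intervalIntegral.integral_congr fun x hx => ?_
    rw [Set.uIcc_of_le ht.le] at hx
    rw [Complex.ofReal_mul, Complex.ofReal_cpow hx.1 (a-1),
      Complex.ofReal_cpow (by linarith [hx.2] : (0:ℝ) ≤ t - x) (b-1)]
    push_cast
    ring
  rw [hcongr, hbeta] at key
  have ht' : ((t : ℂ) ^ ((a:ℂ) + b - 1)) = ((t ^ (a + b - 1) : ℝ) : ℂ) := by
    rw [Complex.ofReal_cpow ht.le]
    push_cast
    ring_nf
  rw [ht', ← Complex.ofReal_add, Complex.Gamma_ofReal, Complex.Gamma_ofReal,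
    Complex.Gamma_ofReal] at key
  have := Complex.ofReal_injective (by exact_mod_cast key)
  rw [this]; ring

lemma ml_summable {α : ℝ} (hα : 0 < α) {x : ℝ} (hx : 0 ≤ x) :
    Summable (fun k : ℕ => x ^ k / Real.Gamma (α * k + 1)) := by
  rcases eq_or_lt_of_le hx with hx0 | hx0
  · refine summable_of_ne_finset_zero (s := {0}) fun k hk => ?_
    simp only [Finset.mem_singleton] at hk
    rw [← hx0, zero_pow hk, zero_div]
  set a : ℕ → ℝ := fun k => x ^ k / Real.Gamma (α * k + 1) with ha
  have hapos : ∀ k, 0 < a k := fun k =>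
    div_pos (pow_pos hx0 k) (Real.Gamma_pos_of_pos (by positivity))
  set m : ℕ := ⌈α⁻¹⌉₊ with hm
  have hm1 : 1 ≤ m := Nat.one_le_ceil_iff.mpr (by positivity)
  have hmα : 1 ≤ (m : ℝ) * α := by
    have := Nat.le_ceil α⁻¹
    calc (1:ℝ) = α⁻¹ * α := by field_simp
    _ ≤ m * α := by apply mul_le_mul_of_nonneg_right this hα.le
  set N : ℕ := ⌈(max 1 (2 * x ^ m)) / α⌉₊ with hN
  have hNα : max 1 (2 * x ^ m) ≤ α * N := by
    have := Nat.le_ceil ((max 1 (2 * x ^ m)) / α)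
    rw [div_le_iff₀ hα] at this
    linarith [this]
  have hkey : ∀ k, N ≤ k → a (k + m) ≤ (1/2) * a k := by
    intro k hk
    have hαk : (2 : ℝ) * x ^ m ≤ α * k := by
      calc (2:ℝ) * x ^ m ≤ α * N := le_trans (le_max_right _ _) hNα
      _ ≤ α * k := by apply mul_le_mul_of_nonneg_left (by exact_mod_cast hk) hα.le
    have h1k : (1 : ℝ) ≤ α * k :=
      le_trans (le_max_left 1 (2 * x ^ m)) (le_trans hNα (by nlinarith [hα.le, (Nat.cast_le (α := ℝ)).mpr hk]))
    have hGmono : (α * k + 1) * Real.Gamma (α * k + 1) ≤ Real.Gamma (α * (k + m) + 1) := by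
      rw [← Real.Gamma_add_one (by positivity)]
      apply Real.Gamma_strictMonoOn_Ici.monotoneOn
      · simp only [Set.mem_Ici]; linarith
      · simp only [Set.mem_Ici]; push_cast; nlinarith
      · push_cast; nlinarith
    have hG1 : 0 < Real.Gamma (α * k + 1) := Real.Gamma_pos_of_pos (by positivity)
    have hG2 : 0 < Real.Gamma (α * (k + m) + 1) := Real.Gamma_pos_of_pos (by positivity)
    rw [ha]
    simp only [Nat.cast_add]
    rw [div_le_iff₀ hG2, pow_add]
    calc x ^ k * x ^ m ≤ x ^ k * (α * k + 1) / 2 := by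
          rw [mul_div_assoc]
          apply mul_le_mul_of_nonneg_left _ (by positivity)
          linarith
      _ = 1/2 * (x ^ k / Real.Gamma (α * k + 1)) * ((α * k + 1) * Real.Gamma (α * k + 1)) := by
          field_simp
      _ ≤ 1/2 * (x ^ k / Real.Gamma (α * k + 1)) * Real.Gamma (α * (k + m) + 1) := by
          apply mul_le_mul_of_nonneg_left hGmono (by positivity)
  set ρ : ℝ := (2:ℝ) ^ (-(m:ℝ)⁻¹) with hρ
  have hρ0 : 0 < ρ := Real.rpow_pos_of_pos (by norm_num) _
  have hρ1 : ρ < 1 := Real.rpow_lt_one_of_one_lt_of_neg (by norm_num)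
    (by rw [neg_lt, neg_zero]; positivity)
  have hρm : ρ ^ m = 1/2 := by
    rw [hρ, ← Real.rpow_natCast _ m, ← Real.rpow_mul (by norm_num)]
    rw [neg_mul, inv_mul_cancel₀ (by positivity : (m:ℝ) ≠ 0)]
    norm_num
  set B : ℝ := ∑ k ∈ Finset.range (N + m), a k / ρ ^ k with hB
  have claim : ∀ k, a k ≤ B * ρ ^ k := by
    intro k
    induction k using Nat.strong_induction_on with
    | _ k ih =>
      rcases lt_or_ge k (N + m) with hk | hk
      · have h1 : a k / ρ ^ k ≤ B := by
          apply Finset.single_le_sum (f := fun k => a k / ρ ^ k)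
            (fun i _ => by positivity) (Finset.mem_range.mpr hk)
        calc a k = (a k / ρ ^ k) * ρ ^ k := by field_simp
          _ ≤ B * ρ ^ k := by apply mul_le_mul_of_nonneg_right h1 (by positivity)
      · have hkm : k - m + m = k := Nat.sub_add_cancel (le_trans (Nat.le_add_left m N) hk)
        have hjN : N ≤ k - m := by omega
        have hjlt : k - m < k := by omega
        calc a k = a (k - m + m) := by rw [hkm]
          _ ≤ (1/2) * a (k - m) := hkey _ hjN
          _ ≤ (1/2) * (B * ρ ^ (k - m)) := by
              apply mul_le_mul_of_nonneg_left (ih _ hjlt) (by norm_num)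
          _ = B * ρ ^ (k - m) * ρ ^ m := by rw [hρm]; ring
          _ = B * ρ ^ k := by rw [mul_assoc, ← pow_add, hkm]
  exact Summable.of_nonneg_of_le (fun k => (hapos k).le) claim
    ((summable_geometric_of_lt_one hρ0.le hρ1).mul_left B)

lemma key_int {α : ℝ} (hα : 0 < α) (β t : ℝ) (hβ : 0 ≤ β) (ht : 0 < t) :
    ∫ x in (0:ℝ)..t, (t - x) ^ (α - 1) * x ^ β =
      Real.Gamma α * Real.Gamma (β + 1) / Real.Gamma (α + β + 1) * t ^ (α + β) := by
  have h := real_beta (β + 1) α t (by linarith) hα ht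
  have hc : ∀ x : ℝ, x ^ (β + 1 - 1) * (t - x) ^ (α - 1) = (t - x) ^ (α - 1) * x ^ β := by
    intro x; rw [add_sub_cancel_right, mul_comm]
  rw [intervalIntegral.integral_congr (fun x _ => hc x)] at h
  rw [h]; ring_nf

lemma interval_integrable_base {α : ℝ} (hα : 0 < α) (t : ℝ) :
    IntervalIntegrable (fun x => (t - x) ^ (α - 1)) volume 0 t := by
  have h := (intervalIntegral.intervalIntegrable_rpow' (by linarith : (-1:ℝ) < α - 1)
    (a := 0) (b := t)).comp_sub_left t
  simpa using h.symm


/-- The one-parameter Mittag-Leffler function `E_{α,1}(z) = ∑ zᵏ / Γ(αk+1)`. -/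
noncomputable def mittagLeffler (α z : ℝ) : ℝ :=
  ∑' k : ℕ, z ^ k / Real.Gamma (α * k + 1)

/-- Fractional Gronwall inequality. -/
theorem fractional_gronwall (α T ε₁ ε₂ : ℝ) (hα : 0 < α) (hT : 0 < T)
    (hε₁ : 0 < ε₁) (hε₂ : 0 < ε₂) (δ : ℝ → ℝ)
    (hδ : ContinuousOn δ (Set.Icc 0 T))
    (hineq : ∀ t ∈ Set.Icc (0 : ℝ) T,
      |δ t| ≤ ε₁ + (ε₂ / Real.Gamma α) * ∫ x in (0 : ℝ)..t, (t - x) ^ (α - 1) * |δ x|) :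
    ∀ t ∈ Set.Icc (0 : ℝ) T, |δ t| ≤ ε₁ * mittagLeffler α (ε₂ * t ^ α) := by
  have hΓα : 0 < Real.Gamma α := Real.Gamma_pos_of_pos hα
  have hΓ1 : ∀ x : ℝ, 0 ≤ x → (0:ℝ) < Real.Gamma (x + 1) :=
    fun x hx => Real.Gamma_pos_of_pos (by linarith)
  obtain ⟨M₀, hM₀⟩ := (isCompact_Icc (a := (0:ℝ)) (b := T)).exists_bound_of_continuousOn hδ
  set M : ℝ := max M₀ 0 with hMdef
  have hM : ∀ x ∈ Set.Icc (0:ℝ) T, |δ x| ≤ M := fun x hx =>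
    le_trans (hM₀ x hx) (le_max_left _ _)
  have hM0 : 0 ≤ M := le_max_right _ _
  have hδabs : ContinuousOn (fun x => |δ x|) (Set.Icc 0 T) := hδ.abs
  have hpow : ∀ x : ℝ, 0 ≤ x → ∀ k : ℕ, (ε₂ * x ^ α) ^ k = ε₂ ^ k * x ^ (α * k) := by
    intro x hx k
    rw [mul_pow, ← Real.rpow_natCast (x ^ α) k, ← Real.rpow_mul hx]
  have P : ∀ n : ℕ, ∀ t ∈ Set.Icc (0:ℝ) T,
      |δ t| ≤ ε₁ * ∑ k ∈ range n, (ε₂ * t ^ α) ^ k / Real.Gamma (α * k + 1)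
        + M * ((ε₂ * t ^ α) ^ n / Real.Gamma (α * n + 1)) := by
    intro n
    induction n with
    | zero =>
      intro t ht
      simpa using hM t ht
    | succ n ih =>
      intro t ht
      obtain ⟨ht0, htT⟩ := ht
      rcases eq_or_lt_of_le ht0 with rfl | htpos
      · -- t = 0
        have h0 := hineq 0 ⟨le_refl 0, hT.le⟩
        rw [intervalIntegral.integral_same, mul_zero, add_zero] at h0
        have hz : (0:ℝ) ^ α = 0 := Real.zero_rpow hα.ne'
        have h1 : ε₁ * ∑ k ∈ range (n+1), (ε₂ * (0:ℝ) ^ α) ^ k / Real.Gamma (α * k + 1) = ε₁ := by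
          rw [hz, mul_zero]
          rw [Finset.sum_eq_single 0]
          · norm_num
          · intro k _ hk; rw [zero_pow hk, zero_div]
          · intro h; simp at h
        rw [h1]
        have hnn : 0 ≤ M * ((ε₂ * (0:ℝ) ^ α) ^ (n+1) / Real.Gamma (α * (n+1:ℕ) + 1)) := by
          have : (0:ℝ) < Real.Gamma (α * (n+1:ℕ) + 1) := hΓ1 _ (by positivity)
          positivity
        linarith
      · -- 0 < t
        set g : ℝ → ℝ := fun x => ε₁ * ∑ k ∈ range n, (ε₂ * x ^ α) ^ k / Real.Gamma (α * k + 1)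
          + M * ((ε₂ * x ^ α) ^ n / Real.Gamma (α * n + 1)) with hg
        have hgcont : Continuous g := by
          apply Continuous.add
          · apply continuous_const.mul
            apply continuous_finset_sum
            intro k _
            exact ((continuous_const.mul (Real.continuous_rpow_const hα.le)).pow k).div_const _
          · exact continuous_const.mul
              (((continuous_const.mul (Real.continuous_rpow_const hα.le)).pow n).div_const _)
        have hbase := interval_integrable_base hα t
        have hsub : Set.uIcc (0:ℝ) t ⊆ Set.Icc 0 T := by
          rw [Set.uIcc_of_le ht0]
          exact Set.Icc_subset_Icc le_rfl htT
        have hint1 : IntervalIntegrable (fun x => (t - x) ^ (α - 1) * |δ x|) volume 0 t :=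
          hbase.mul_continuousOn (hδabs.mono hsub)
        have hint2 : IntervalIntegrable (fun x => (t - x) ^ (α - 1) * g x) volume 0 t :=
          hbase.mul_continuousOn hgcont.continuousOn
        have hbnn : ∀ x ∈ Set.Icc (0:ℝ) t, 0 ≤ (t - x) ^ (α - 1) := by
          intro x hx
          exact Real.rpow_nonneg (by linarith [hx.2]) _
        have hmono : (∫ x in (0:ℝ)..t, (t - x) ^ (α - 1) * |δ x|)
            ≤ ∫ x in (0:ℝ)..t, (t - x) ^ (α - 1) * g x := by
          apply intervalIntegral.integral_mono_on ht0 hint1 hint2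
          intro x hx
          exact mul_le_mul_of_nonneg_left
            (ih x ⟨hx.1, le_trans hx.2 htT⟩) (hbnn x hx)
        have hterm : ∀ k : ℕ, IntervalIntegrable
            (fun x => (t - x) ^ (α - 1) * x ^ (α * k)) volume 0 t :=
          fun k => hbase.mul_continuousOn
            (Real.continuous_rpow_const (by positivity)).continuousOn
        have hintsum : ∀ k ∈ range n, IntervalIntegrable
            (fun x => (ε₁ * ε₂ ^ k / Real.Gamma (α * k + 1))
              * ((t - x) ^ (α - 1) * x ^ (α * k))) volume 0 t :=
          fun k _ => (hterm k).const_mul _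
        have hsplit : (∫ x in (0:ℝ)..t, (t - x) ^ (α - 1) * g x)
            = (∑ k ∈ range n, (ε₁ * ε₂ ^ k / Real.Gamma (α * k + 1))
                * ∫ x in (0:ℝ)..t, (t - x) ^ (α - 1) * x ^ (α * k))
              + (M * ε₂ ^ n / Real.Gamma (α * n + 1))
                * ∫ x in (0:ℝ)..t, (t - x) ^ (α - 1) * x ^ (α * n) := by
          have step1 : (∫ x in (0:ℝ)..t, (t - x) ^ (α - 1) * g x)
              = ∫ x in (0:ℝ)..t,
                  ((∑ k ∈ range n, (ε₁ * ε₂ ^ k / Real.Gamma (α * k + 1))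
                    * ((t - x) ^ (α - 1) * x ^ (α * k)))
                  + (M * ε₂ ^ n / Real.Gamma (α * n + 1))
                    * ((t - x) ^ (α - 1) * x ^ (α * n))) := by
            apply intervalIntegral.integral_congr
            intro x hx
            have hx0 : 0 ≤ x := by
              rw [Set.uIcc_of_le ht0] at hx; exact hx.1
            simp only [hg]
            rw [mul_add]
            congr 1
            · rw [Finset.mul_sum, Finset.mul_sum]
              apply Finset.sum_congr rfl
              intro k _
              rw [hpow x hx0 k]; ring
            · rw [hpow x hx0 n]; ring
          have hS : IntervalIntegrable
              (fun x => ∑ k ∈ range n, (ε₁ * ε₂ ^ k / Real.Gamma (α * k + 1))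
                * ((t - x) ^ (α - 1) * x ^ (α * k))) volume 0 t := by
            have h := IntervalIntegrable.sum (range n) hintsum
            have heq : (∑ i ∈ range n, fun x => (ε₁ * ε₂ ^ i / Real.Gamma (α * i + 1))
                * ((t - x) ^ (α - 1) * x ^ (α * i)))
                = fun x => ∑ k ∈ range n, (ε₁ * ε₂ ^ k / Real.Gamma (α * k + 1))
                  * ((t - x) ^ (α - 1) * x ^ (α * k)) := by
              ext x; simp
            rwa [heq] at h
          rw [step1, intervalIntegral.integral_add hS ((hterm n).const_mul _),
            intervalIntegral.integral_finset_sum hintsum]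
          simp_rw [intervalIntegral.integral_const_mul]
        have hval : ∀ k : ℕ, (∫ x in (0:ℝ)..t, (t - x) ^ (α - 1) * x ^ (α * k))
            = Real.Gamma α * Real.Gamma (α * k + 1) / Real.Gamma (α + α * k + 1)
              * t ^ (α + α * k) := fun k => key_int hα (α * k) t (by positivity) htpos
        have hid : ∀ (c : ℝ) (k : ℕ), (ε₂ / Real.Gamma α)
            * ((c * ε₂ ^ k / Real.Gamma (α * k + 1))
              * (Real.Gamma α * Real.Gamma (α * k + 1) / Real.Gamma (α + α * k + 1)
                * t ^ (α + α * k)))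
            = c * ((ε₂ * t ^ α) ^ (k + 1) / Real.Gamma (α * (k + 1 : ℕ) + 1)) := by
          intro c k
          rw [hpow t ht0 (k + 1)]
          have e1 : α * ((k:ℕ) + 1 : ℝ) = α + α * k := by ring
          push_cast
          rw [e1]
          have h1 : (0:ℝ) < Real.Gamma (α * k + 1) := hΓ1 _ (by positivity)
          have h2 : (0:ℝ) < Real.Gamma (α + α * k + 1) := hΓ1 _ (by positivity)
          field_simp
          ring
        calc |δ t| ≤ ε₁ + (ε₂ / Real.Gamma α)
              * ∫ x in (0:ℝ)..t, (t - x) ^ (α - 1) * |δ x| := hineq t ⟨ht0, htT⟩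
          _ ≤ ε₁ + (ε₂ / Real.Gamma α) * ∫ x in (0:ℝ)..t, (t - x) ^ (α - 1) * g x := by
              have h2 : 0 ≤ ε₂ / Real.Gamma α := by positivity
              nlinarith [hmono]
          _ = ε₁ * ∑ k ∈ range (n+1), (ε₂ * t ^ α) ^ k / Real.Gamma (α * k + 1)
              + M * ((ε₂ * t ^ α) ^ (n+1) / Real.Gamma (α * (n+1:ℕ) + 1)) := by
              rw [hsplit]
              simp_rw [hval]
              rw [Finset.sum_range_succ'
                (fun k => (ε₂ * t ^ α) ^ k / Real.Gamma (α * k + 1)) n]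
              rw [mul_add, Finset.mul_sum, mul_add, Finset.mul_sum]
              rw [Finset.sum_congr rfl (fun k _ => hid ε₁ k), hid M n]
              have hone : (ε₂ * t ^ α) ^ (0:ℕ) / Real.Gamma (α * (0:ℕ) + 1) = 1 := by
                norm_num [Real.Gamma_one]
              rw [hone]
              ring
  -- pass to the limit
  intro t ht
  have hx : 0 ≤ ε₂ * t ^ α := by
    have := Real.rpow_nonneg ht.1 α
    positivity
  have hsum := ml_summable hα hx
  have hml : ∀ n : ℕ, ε₁ * ∑ k ∈ range n, (ε₂ * t ^ α) ^ k / Real.Gamma (α * k + 1)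
      ≤ ε₁ * mittagLeffler α (ε₂ * t ^ α) := by
    intro n
    apply mul_le_mul_of_nonneg_left _ hε₁.le
    exact Summable.sum_le_tsum (range n)
      (fun k _ => div_nonneg (pow_nonneg hx k) (hΓ1 _ (by positivity)).le) hsum
  have hb : ∀ n : ℕ, |δ t| ≤ ε₁ * mittagLeffler α (ε₂ * t ^ α)
      + M * ((ε₂ * t ^ α) ^ n / Real.Gamma (α * n + 1)) := by
    intro n
    have := P n t ht
    linarith [hml n]
  have htend : Tendsto (fun n : ℕ => ε₁ * mittagLeffler α (ε₂ * t ^ α)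
      + M * ((ε₂ * t ^ α) ^ n / Real.Gamma (α * n + 1))) atTop
      (nhds (ε₁ * mittagLeffler α (ε₂ * t ^ α) + M * 0)) :=
    tendsto_const_nhds.add (hsum.tendsto_atTop_zero.const_mul M)
  have := ge_of_tendsto htend (Filter.Eventually.of_forall hb)
  simpa using this
end
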